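/- arXiv:2410.13426 — 6 statements merged into one kernel-verified Lean document; each statement's English description precedes it below -/
import Mathlib

section
/- For any nonempty word w with |w| = n and any integer q ≥ 1 and any k with nq ≤ k < n(q+1), the probability P{T_w(X) = k} is at most p(w)(1 − p(w))^{q−1}. -/
open MeasureTheory ENNReal

/-- `w` occurs as a factor (contiguous subword) of the infinite word `ξ`. -/
def occursIn {r : ℕ} (w : List (Fin r)) (ξ : ℕ → Fin r) : Prop :=
  ∃ i : ℕ, ∀ j : ℕ, (hj : j < w.length) → ξ (i + j) = w.get ⟨j, hj⟩

/-- The waiting time `T_w(ξ)`: the first time `k` at which `w` has just occurred,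
i.e. `ξ[k-|w|+1, k] = w` (0-indexed: positions `k-|w|, …, k-1`); `∞` if `w` never occurs. -/
noncomputable def waitTime {r : ℕ} (w : List (Fin r)) (ξ : ℕ → Fin r) : ℝ≥0∞ :=
  sInf {t : ℝ≥0∞ | ∃ k : ℕ, t = k ∧ w.length ≤ k ∧
    ∀ j : ℕ, (hj : j < w.length) → ξ (k - w.length + j) = w.get ⟨j, hj⟩}

/-- Expected waiting time `E(w)`. -/
noncomputable def Ew {r : ℕ} (μ : Measure (ℕ → Fin r)) (w : List (Fin r)) : ℝ≥0∞ :=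
  ∫⁻ ξ, waitTime w ξ ∂μ

/-- The infinite word `w'ξ` obtained by prepending the finite word `w'` to `ξ`. -/
def prepend {r : ℕ} (w' : List (Fin r)) (ξ : ℕ → Fin r) : ℕ → Fin r :=
  fun n => if h : n < w'.length then w'.get ⟨n, h⟩ else ξ (n - w'.length)

/-- Conditional expected waiting time `E(u | w') = E[T_u(w'X)] − |w'|`. -/
noncomputable def condEw {r : ℕ} (μ : Measure (ℕ → Fin r)) (u w' : List (Fin r)) : ℝ≥0∞ :=
  (∫⁻ ξ, waitTime u (prepend w' ξ) ∂μ) - w'.length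

/-- `p(w) = ∏ᵢ p(w(i))`. -/
noncomputable def pword {r : ℕ} (p : Fin r → ℝ≥0∞) (w : List (Fin r)) : ℝ≥0∞ := (w.map p).prod

/-- `v` is a bifix of `w`: `v ≠ w` and `v` is both a prefix and a suffix of `w`. -/
def IsBifix {r : ℕ} (v w : List (Fin r)) : Prop := v ≠ w ∧ v <+: w ∧ v <:+ w

/-- `v` is the longest bifix of `w`. -/
def IsLongestBifix {r : ℕ} (v w : List (Fin r)) : Prop :=
  IsBifix v w ∧ ∀ v', IsBifix v' w → v'.length ≤ v.length

section Aux
variable {r : ℕ}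

/-- Cylinder set: infinite words starting with `u`. -/
def Cyl (d : Fin r) (u : List (Fin r)) : Set (ℕ → Fin r) :=
  {ξ | ∀ i < u.length, ξ i = u.getD i d}

/-- All words of length `m`. -/
def allW (r m : ℕ) : Finset (List (Fin r)) :=
  (Finset.univ : Finset (Fin m → Fin r)).image List.ofFn

lemma mem_allW {m : ℕ} {u : List (Fin r)} : u ∈ allW r m ↔ u.length = m := by
  constructor
  · rintro hu
    obtain ⟨g, -, rfl⟩ := Finset.mem_image.1 hu
    simp
  · rintro rfl
    exact Finset.mem_image.2 ⟨u.get, Finset.mem_univ _, List.ofFn_get u⟩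

lemma pword_ofFn (p : Fin r → ℝ≥0∞) {m : ℕ} (g : Fin m → Fin r) :
    pword p (List.ofFn g) = ∏ i, p (g i) := by
  simp [pword, List.map_ofFn, List.prod_ofFn, Function.comp]

lemma pword_append (p : Fin r → ℝ≥0∞) (u v : List (Fin r)) :
    pword p (u ++ v) = pword p u * pword p v := by
  simp [pword]

lemma sum_allW (p : Fin r → ℝ≥0∞) (hp1 : ∑ x, p x = 1) (m : ℕ) :
    ∑ u ∈ allW r m, pword p u = 1 := by
  rw [allW, Finset.sum_image (fun x _ y _ h => List.ofFn_injective h)]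
  simp only [pword_ofFn]
  rw [← Fintype.sum_pow, hp1, one_pow]

lemma pword_le_one (p : Fin r → ℝ≥0∞) (hp1 : ∑ x, p x = 1) (u : List (Fin r)) :
    pword p u ≤ 1 := by
  induction u with
  | nil => simp [pword]
  | cons a u ih =>
      have ha : p a ≤ 1 := hp1 ▸ Finset.single_le_sum (fun i _ => zero_le) (Finset.mem_univ a)
      calc pword p (a :: u) = p a * pword p u := by simp [pword]
        _ ≤ 1 * 1 := mul_le_mul' ha ih
        _ = 1 := one_mul 1

lemma sum_concat (p : Fin r → ℝ≥0∞) (S T : Finset (List (Fin r))) (m : ℕ)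
    (hS : ∀ u ∈ S, u.length = m) :
    ∑ u ∈ (S ×ˢ T).image (fun bu => bu.1 ++ bu.2), pword p u
      = (∑ u ∈ S, pword p u) * (∑ v ∈ T, pword p v) := by
  rw [Finset.sum_image, Finset.sum_product, Finset.sum_mul_sum]
  · simp only [pword_append]
  · rintro ⟨x1, x2⟩ hx ⟨y1, y2⟩ hy h
    have hx' := Finset.mem_product.1 hx
    have hy' := Finset.mem_product.1 hy
    have hlen : x1.length = y1.length := by rw [hS _ hx'.1, hS _ hy'.1]
    obtain ⟨h1, h2⟩ := List.append_inj h hlen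
    exact Prod.ext h1 h2

/-- Words of the form `b₁ ++ ⋯ ++ b_t ++ w` where each `bᵢ` has length `|w|` and `bᵢ ≠ w`. -/
def GW (w : List (Fin r)) : ℕ → Finset (List (Fin r))
  | 0 => {w}
  | t + 1 => (((allW r w.length).filter (· ≠ w)) ×ˢ GW w t).image (fun bu => bu.1 ++ bu.2)

lemma length_GW {w : List (Fin r)} : ∀ {t : ℕ} {u : List (Fin r)}, u ∈ GW w t →
    u.length = t * w.length + w.length
  | 0, u, hu => by
      simp only [GW, Finset.mem_singleton] at hu
      simp [hu]
  | t + 1, u, hu => by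
      simp only [GW] at hu
      obtain ⟨⟨b, v⟩, hbv, rfl⟩ := Finset.mem_image.1 hu
      have hbv' := Finset.mem_product.1 hbv
      have hb : b.length = w.length := mem_allW.1 (Finset.mem_filter.1 hbv'.1).1
      have hv := length_GW hbv'.2
      simp only [List.length_append, hb, hv]
      ring

lemma sum_GW (p : Fin r → ℝ≥0∞) (hp1 : ∑ x, p x = 1) (w : List (Fin r)) (t : ℕ) :
    ∑ u ∈ GW w t, pword p u = pword p w * (1 - pword p w) ^ t := by
  induction t with
  | zero => simp [GW]
  | succ t ih =>
      have hfil : ∑ u ∈ (allW r w.length).filter (· ≠ w), pword p u = 1 - pword p w := by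
        have hsplit := Finset.sum_filter_add_sum_filter_not (allW r w.length)
          (· ≠ w) (pword p)
        have hwmem : w ∈ allW r w.length := mem_allW.2 rfl
        have hone : (allW r w.length).filter (fun u => ¬ u ≠ w) = {w} := by
          ext u
          simp only [Finset.mem_filter, Finset.mem_singleton, ne_eq, not_not]
          exact ⟨fun h => h.2, fun h => ⟨h ▸ hwmem, h⟩⟩
        rw [hone, Finset.sum_singleton, sum_allW p hp1] at hsplit
        exact ENNReal.eq_sub_of_add_eq
          (lt_of_le_of_lt (pword_le_one p hp1 w) one_lt_top).ne hsplit
      rw [GW, sum_concat p _ _ w.length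
        (fun u hu => mem_allW.1 (Finset.mem_filter.1 hu).1), hfil, ih, pow_succ]
      ring

lemma measurableSet_Cyl (d : Fin r) (u : List (Fin r)) : MeasurableSet (Cyl d u) := by
  have : Cyl d u = ⋂ i ∈ Finset.range u.length, (fun ξ : ℕ → Fin r => ξ i) ⁻¹' {u.getD i d} := by
    ext ξ
    simp [Cyl]
  rw [this]
  exact Finset.measurableSet_biInter _
    (fun i _ => (measurable_pi_apply i) (measurableSet_singleton _))

lemma prod_range_getD (p : Fin r → ℝ≥0∞) (d : Fin r) :
    ∀ u : List (Fin r), ∏ i ∈ Finset.range u.length, p (u.getD i d) = pword p u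
  | [] => by simp [pword]
  | a :: u => by
      rw [List.length_cons, Finset.prod_range_succ']
      simp only [List.getD_cons_succ, List.getD_cons_zero]
      rw [prod_range_getD p d u]
      simp [pword, mul_comm]

lemma measure_Cyl {p : Fin r → ℝ≥0∞} {μ : Measure (ℕ → Fin r)}
    (hiid : ∀ (m : ℕ) (f : ℕ → Fin r),
      μ {ξ | ∀ i < m, ξ i = f i} = ∏ i ∈ Finset.range m, p (f i))
    (d : Fin r) (u : List (Fin r)) : μ (Cyl d u) = pword p u := by
  have h := hiid u.length (fun i => u.getD i d)
  rw [prod_range_getD p d u] at h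
  exact h

lemma measure_cylUnion {p : Fin r → ℝ≥0∞} {μ : Measure (ℕ → Fin r)}
    (hiid : ∀ (m : ℕ) (f : ℕ → Fin r),
      μ {ξ | ∀ i < m, ξ i = f i} = ∏ i ∈ Finset.range m, p (f i))
    (d : Fin r) (S : Finset (List (Fin r))) (m : ℕ) (hS : ∀ u ∈ S, u.length = m) :
    μ (⋃ u ∈ S, Cyl d u) = ∑ u ∈ S, pword p u := by
  rw [measure_biUnion_finset _ (fun u _ => measurableSet_Cyl d u)]
  · exact Finset.sum_congr rfl fun u _ => measure_Cyl hiid d u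
  · rintro u hu v hv huv
    refine Set.disjoint_left.2 fun ξ hξu hξv => huv ?_
    refine List.ext_getElem (by rw [hS u hu, hS v hv]) fun i h1 h2 => ?_
    have e1 := hξu i h1
    have e2 := hξv i h2
    rw [List.getD_eq_getElem u d h1] at e1
    rw [List.getD_eq_getElem v d h2] at e2
    rw [← e1, ← e2]

lemma waitTime_spec {w : List (Fin r)} {ξ : ℕ → Fin r} {k : ℕ}
    (h : waitTime w ξ = k) :
    (w.length ≤ k ∧ ∀ j : ℕ, (hj : j < w.length) → ξ (k - w.length + j) = w.get ⟨j, hj⟩) ∧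
    ∀ k' < k, ¬ (w.length ≤ k' ∧
      ∀ j : ℕ, (hj : j < w.length) → ξ (k' - w.length + j) = w.get ⟨j, hj⟩) := by
  classical
  set N : Set ℕ := {k' | w.length ≤ k' ∧
    ∀ j : ℕ, (hj : j < w.length) → ξ (k' - w.length + j) = w.get ⟨j, hj⟩} with hN
  have hSset : {t : ℝ≥0∞ | ∃ k : ℕ, t = k ∧ w.length ≤ k ∧
      ∀ j : ℕ, (hj : j < w.length) → ξ (k - w.length + j) = w.get ⟨j, hj⟩}
      = Nat.cast '' N := by
    ext t
    simp only [Set.mem_setOf_eq, Set.mem_image, hN]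
    constructor
    · rintro ⟨k', rfl, h1, h2⟩; exact ⟨k', ⟨h1, h2⟩, rfl⟩
    · rintro ⟨k', ⟨h1, h2⟩, rfl⟩; exact ⟨k', rfl, h1, h2⟩
  rw [waitTime, hSset] at h
  have hne : N.Nonempty := by
    by_contra hemp
    rw [Set.not_nonempty_iff_eq_empty] at hemp
    rw [hemp] at h
    simp only [Set.image_empty, sInf_empty] at h
    exact (ENNReal.natCast_ne_top k) h.symm
  have hinf : sInf (Nat.cast '' N : Set ℝ≥0∞) = (sInf N : ℕ) := by
    apply le_antisymm
    · exact sInf_le ⟨sInf N, Nat.sInf_mem hne, rfl⟩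
    · refine le_sInf ?_
      rintro t ⟨k', hk', rfl⟩
      exact_mod_cast Nat.sInf_le hk'
  rw [hinf] at h
  have hk : sInf N = k := Nat.cast_inj.1 h
  constructor
  · exact hk ▸ Nat.sInf_mem hne
  · intro k' hk' hmem
    exact absurd hmem (Nat.notMem_of_lt_sInf (hk ▸ hk' : k' < sInf N))

lemma mem_GW_of {w : List (Fin r)} :
    ∀ {t : ℕ} {u : List (Fin r)},
    u.length = t * w.length + w.length →
    u.drop (t * w.length) = w →
    (∀ j < t, (u.drop (j * w.length)).take w.length ≠ w) →
    u ∈ GW w t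
  | 0, u, hlen, hdrop, _ => by
      simp only [Nat.zero_mul, List.drop_zero] at hdrop
      simp [GW, hdrop]
  | t + 1, u, hlen, hdrop, hbad => by
      set n := w.length with hn
      have hnu : n ≤ u.length := by omega
      have hb : (u.take n).length = n := by
        rw [List.length_take]; omega
      have hbne : u.take n ≠ w := by
        have := hbad 0 (Nat.succ_pos t)
        simpa using this
      have hvlen : (u.drop n).length = t * n + n := by
        rw [List.length_drop, hlen, Nat.succ_mul]; omega
      have hvdrop : (u.drop n).drop (t * n) = w := by
        rw [List.drop_drop]
        have : n + t * n = (t + 1) * n := by ring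
        rw [this]
        exact hdrop
      have hvbad : ∀ j < t, ((u.drop n).drop (j * n)).take n ≠ w := by
        intro j hj
        rw [List.drop_drop]
        have : n + j * n = (j + 1) * n := by ring
        rw [this]
        exact hbad (j + 1) (by omega)
      have hv : u.drop n ∈ GW w t := mem_GW_of hvlen hvdrop hvbad
      simp only [GW]
      refine Finset.mem_image.2 ⟨(u.take n, u.drop n), Finset.mem_product.2 ⟨?_, hv⟩,
        List.take_append_drop n u⟩
      exact Finset.mem_filter.2 ⟨mem_allW.2 hb, hbne⟩

end Aux

theorem statement_2 {r : ℕ} (hr : 2 ≤ r) (p : Fin r → ℝ≥0∞)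
    (hp1 : ∑ x, p x = 1) (hpos : ∀ x, 0 < p x)
    (μ : Measure (ℕ → Fin r)) [IsProbabilityMeasure μ]
    (hiid : ∀ (m : ℕ) (f : ℕ → Fin r),
      μ {ξ | ∀ i < m, ξ i = f i} = ∏ i ∈ Finset.range m, p (f i))
    (w : List (Fin r)) (hw : w ≠ []) (q k : ℕ) (hq : 1 ≤ q)
    (h1 : w.length * q ≤ k) (h2 : k < w.length * (q + 1)) :
    μ {ξ | waitTime w ξ = k} ≤ pword p w * (1 - pword p w) ^ (q - 1) := by
  classical
  set n := w.length with hn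
  have hn0 : 0 < n := List.length_pos_iff.2 hw
  have hd : 0 < r := by omega
  set d : Fin r := ⟨0, hd⟩ with hdd
  set a := k - q * n with ha
  have hqn : q * n ≤ k := by rw [mul_comm]; exact h1
  have hak : a + q * n = k := Nat.sub_add_cancel hqn
  have hq1 : (q - 1) * n + n = q * n := by
    have h : q - 1 + 1 = q := Nat.succ_pred_eq_of_pos hq
    nth_rewrite 2 [← h]
    rw [add_one_mul]
  set FS := ((allW r a) ×ˢ GW w (q - 1)).image
    (fun xu : List (Fin r) × List (Fin r) => xu.1 ++ xu.2) with hFS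
  have hlenFS : ∀ u ∈ FS, u.length = k := by
    intro u hu
    obtain ⟨⟨x, v⟩, hxv, rfl⟩ := Finset.mem_image.1 hu
    have hxv' := Finset.mem_product.1 hxv
    have hx := mem_allW.1 hxv'.1
    have hv := length_GW hxv'.2
    rw [← hn] at hv
    simp only [List.length_append, hx, hv]
    omega
  have hsub : {ξ | waitTime w ξ = (k : ℝ≥0∞)} ⊆ ⋃ u ∈ FS, Cyl d u := by
    intro ξ hξ
    obtain ⟨⟨hkn, hM⟩, hmin⟩ := waitTime_spec hξ
    set u := List.ofFn (fun i : Fin k => ξ i) with hu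
    have hulen : u.length = k := by simp [hu]
    have hgetu : ∀ (i : ℕ) (h : i < u.length), u[i] = ξ i := by
      intro i h
      simp [hu]
    have hdw : u.drop (a + (q - 1) * n) = w := by
      have hkey : a + (q - 1) * n = k - n := by omega
      rw [hkey]
      refine List.ext_getElem (by rw [List.length_drop, hulen]; omega) fun i h1 h2 => ?_
      rw [List.getElem_drop]
      rw [hgetu _ (by omega)]
      have hi : i < n := by
        have := h2
        omega
      have := hM i hi
      rw [List.get_eq_getElem] at this
      exact this
    have huFS : u ∈ FS := by
      refine Finset.mem_image.2 ⟨(u.take a, u.drop a), Finset.mem_product.2 ⟨?_, ?_⟩,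
        List.take_append_drop a u⟩
      · exact mem_allW.2 (by rw [List.length_take]; omega)
      · refine mem_GW_of ?_ ?_ ?_
        · rw [List.length_drop, hulen, ← hn]
          omega
        · rw [List.drop_drop, ← hn]
          exact hdw
        · intro j hj heq
          rw [List.drop_drop, ← hn] at heq
          have hj1 : (j + 1) * n ≤ (q - 1) * n := Nat.mul_le_mul_right n (by omega)
          have hjn : j * n + n = (j + 1) * n := by ring
          have hlt : a + j * n + n ≤ k - n := by omega
          refine hmin (a + j * n + n) (by omega) ⟨by omega, fun i hi => ?_⟩
          have hiw := congrArg (fun l => l.getD i d) heq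
          have hlen1 : i < ((u.drop (a + j * n)).take n).length := by
            rw [List.length_take, List.length_drop, hulen]
            omega
          have hlen2 : i < (u.drop (a + j * n)).length := by
            rw [List.length_drop, hulen]
            omega
          rw [List.getD_eq_getElem _ d hlen1, List.getElem_take, List.getElem_drop,
            hgetu _ (by omega), List.getD_eq_getElem _ d (by omega : i < w.length)] at hiw
          rw [List.get_eq_getElem]
          have harg : a + j * n + n - w.length + i = a + j * n + i := by omega
          rw [harg]
          exact hiw
    refine Set.mem_iUnion₂.2 ⟨u, huFS, ?_⟩
    intro i hi
    rw [List.getD_eq_getElem u d hi, hgetu]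
  calc μ {ξ | waitTime w ξ = (k : ℝ≥0∞)}
      ≤ μ (⋃ u ∈ FS, Cyl d u) := measure_mono hsub
    _ = ∑ u ∈ FS, pword p u := measure_cylUnion hiid d FS k hlenFS
    _ = (∑ u ∈ allW r a, pword p u) * (∑ v ∈ GW w (q - 1), pword p v) :=
        sum_concat p _ _ a (fun u hu => mem_allW.1 hu)
    _ = pword p w * (1 - pword p w) ^ (q - 1) := by
        rw [sum_allW p hp1, sum_GW p hp1, one_mul]
end

section
/- If a finite word w factors as w = w₁w₂ (concatenation of finite words), then E(w) = E(w | w₁) + E(w₁), where E(w | w') is the expected additional waiting time for w to occur after the prefix w' has been written. -/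
open MeasureTheory ENNReal

namespace Stmt4Aux

variable {r : ℕ}

/-- The set of admissible ending times of `w` in `ξ`. -/
def Splus (w : List (Fin r)) (ξ : ℕ → Fin r) : Set ℕ :=
  {k | w.length ≤ k ∧ ∀ j : ℕ, (hj : j < w.length) → ξ (k - w.length + j) = w.get ⟨j, hj⟩}

lemma waitTime_set_eq (w : List (Fin r)) (ξ : ℕ → Fin r) :
    {t : ℝ≥0∞ | ∃ k : ℕ, t = k ∧ w.length ≤ k ∧
      ∀ j : ℕ, (hj : j < w.length) → ξ (k - w.length + j) = w.get ⟨j, hj⟩}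
      = (fun k : ℕ => (k : ℝ≥0∞)) '' Splus w ξ := by
  ext t
  constructor
  · rintro ⟨k, rfl, h1, h2⟩
    exact ⟨k, ⟨h1, h2⟩, rfl⟩
  · rintro ⟨k, ⟨h1, h2⟩, rfl⟩
    exact ⟨k, rfl, h1, h2⟩

lemma waitTime_eq_top_iff {w : List (Fin r)} {ξ : ℕ → Fin r} :
    waitTime w ξ = ⊤ ↔ Splus w ξ = ∅ := by
  rw [waitTime, waitTime_set_eq]
  constructor
  · intro h
    by_contra hne
    obtain ⟨k, hk⟩ := Set.nonempty_iff_ne_empty.mpr hne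
    have : sInf ((fun k : ℕ => (k : ℝ≥0∞)) '' Splus w ξ) ≤ (k : ℝ≥0∞) :=
      sInf_le ⟨k, hk, rfl⟩
    rw [h] at this
    exact (ENNReal.natCast_ne_top k) (top_le_iff.mp this)
  · intro h
    rw [h]
    simp

lemma waitTime_eq_coe {w : List (Fin r)} {ξ : ℕ → Fin r} (h : (Splus w ξ).Nonempty) :
    waitTime w ξ = (sInf (Splus w ξ) : ℕ) := by
  rw [waitTime, waitTime_set_eq]
  apply le_antisymm
  · exact sInf_le ⟨_, Nat.sInf_mem h, rfl⟩
  · refine le_sInf ?_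
    rintro t ⟨k, hk, rfl⟩
    exact_mod_cast Nat.cast_le.mpr (Nat.sInf_le hk)

lemma waitTime_ne_top {w : List (Fin r)} {ξ : ℕ → Fin r} (h : waitTime w ξ ≠ ⊤) :
    ∃ k : ℕ, waitTime w ξ = (k : ℝ≥0∞) := by
  rcases Set.eq_empty_or_nonempty (Splus w ξ) with he | hne
  · exact absurd (waitTime_eq_top_iff.mpr he) h
  · exact ⟨_, waitTime_eq_coe hne⟩

lemma waitTime_coe_iff {w : List (Fin r)} {ξ : ℕ → Fin r} {k : ℕ} :
    waitTime w ξ = (k : ℝ≥0∞) ↔ k ∈ Splus w ξ ∧ ∀ k' < k, k' ∉ Splus w ξ := by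
  constructor
  · intro h
    rcases Set.eq_empty_or_nonempty (Splus w ξ) with he | hne
    · rw [waitTime_eq_top_iff.mpr he] at h
      exact absurd h.symm (ENNReal.natCast_ne_top k)
    · rw [waitTime_eq_coe hne] at h
      have hk : sInf (Splus w ξ) = k := Nat.cast_injective h
      subst hk
      exact ⟨Nat.sInf_mem hne, fun k' hk' hmem => absurd (Nat.sInf_le hmem) (by omega)⟩
  · rintro ⟨h1, h2⟩
    rw [waitTime_eq_coe ⟨k, h1⟩]
    congr 1
    apply le_antisymm (Nat.sInf_le h1)
    by_contra hlt
    exact h2 _ (by omega) (Nat.sInf_mem ⟨k, h1⟩)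

lemma waitTime_ge (w : List (Fin r)) (ξ : ℕ → Fin r) :
    (w.length : ℝ≥0∞) ≤ waitTime w ξ := by
  rw [waitTime, waitTime_set_eq]
  refine le_sInf ?_
  rintro t ⟨k, hk, rfl⟩
  exact_mod_cast Nat.cast_le.mpr hk.1

open Classical in
lemma waitTime_eq_iInf (w : List (Fin r)) (ξ : ℕ → Fin r) :
    waitTime w ξ = ⨅ k : ℕ, if k ∈ Splus w ξ then (k : ℝ≥0∞) else ⊤ := by
  rw [waitTime, waitTime_set_eq]
  apply le_antisymm
  · refine le_iInf fun k => ?_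
    split_ifs with hk
    · exact sInf_le ⟨k, hk, rfl⟩
    · exact le_top
  · refine le_sInf ?_
    rintro t ⟨k, hk, rfl⟩
    exact iInf_le_of_le k (by simp [hk])

lemma measurableSet_mem_Splus (w : List (Fin r)) (k : ℕ) :
    MeasurableSet {ξ : ℕ → Fin r | k ∈ Splus w ξ} := by
  have heq : {ξ : ℕ → Fin r | k ∈ Splus w ξ} =
      {ξ : ℕ → Fin r | w.length ≤ k} ∩
        ⋂ j : Fin w.length,
          (fun ξ : ℕ → Fin r => ξ (k - w.length + (j : ℕ))) ⁻¹' {w.get j} := by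
    ext ξ
    simp only [Splus, Set.mem_setOf_eq, Set.mem_inter_iff, Set.mem_iInter,
      Set.mem_preimage, Set.mem_singleton_iff]
    constructor
    · rintro ⟨h1, h2⟩
      exact ⟨h1, fun j => h2 j j.2⟩
    · rintro ⟨h1, h2⟩
      exact ⟨h1, fun j hj => h2 ⟨j, hj⟩⟩
  rw [heq]
  refine MeasurableSet.inter ?_ (MeasurableSet.iInter fun j =>
    (measurable_pi_apply _) (measurableSet_singleton _))
  by_cases hk : w.length ≤ k
  · simp only [hk, Set.setOf_true]
    exact MeasurableSet.univ
  · simp only [hk, Set.setOf_false]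
    exact MeasurableSet.empty

lemma measurable_waitTime (w : List (Fin r)) : Measurable (waitTime w : (ℕ → Fin r) → ℝ≥0∞) := by
  classical
  have heq : (waitTime w : (ℕ → Fin r) → ℝ≥0∞)
      = fun ξ => ⨅ k : ℕ, if k ∈ Splus w ξ then (k : ℝ≥0∞) else ⊤ :=
    funext fun ξ => waitTime_eq_iInf w ξ
  rw [heq]
  exact Measurable.iInf fun k =>
    Measurable.ite (measurableSet_mem_Splus w k) measurable_const measurable_const

lemma measurable_prepend (w' : List (Fin r)) :
    Measurable (prepend w' : (ℕ → Fin r) → ℕ → Fin r) := by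
  apply measurable_pi_lambda
  intro n
  by_cases hn : n < w'.length
  · have heq : (fun ξ : ℕ → Fin r => prepend w' ξ n) = fun _ => w'.get ⟨n, hn⟩ := by
      funext ξ; simp [prepend, hn]
    rw [heq]; exact measurable_const
  · have heq : (fun ξ : ℕ → Fin r => prepend w' ξ n) = fun ξ => ξ (n - w'.length) := by
      funext ξ; simp [prepend, hn]
    rw [heq]; exact measurable_pi_apply _

/-! ### Cylinder sets -/

/-- The cylinder set of sequences starting with the first `m` values of `f`. -/
def Cyl (m : ℕ) (f : ℕ → Fin r) : Set (ℕ → Fin r) := {ξ | ∀ i < m, ξ i = f i}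

lemma measurableSet_cyl (m : ℕ) (f : ℕ → Fin r) : MeasurableSet (Cyl m f) := by
  have heq : Cyl m f = ⋂ i ∈ Finset.range m, (fun ξ : ℕ → Fin r => ξ i) ⁻¹' {f i} := by
    ext ξ
    simp [Cyl]
  rw [heq]
  exact MeasurableSet.biInter (Set.to_countable _) fun i _ =>
    (measurable_pi_apply i) (measurableSet_singleton (f i))

lemma cylSet_piSystem : IsPiSystem {A : Set (ℕ → Fin r) | ∃ m f, A = Cyl m f} := by
  rintro _ ⟨m, f, rfl⟩ _ ⟨m', f', rfl⟩ hne
  obtain ⟨ξ₀, hξ₀f, hξ₀f'⟩ := hne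
  rcases le_total m m' with hmm | hmm
  · refine ⟨m', f', ?_⟩
    apply Set.eq_of_subset_of_subset Set.inter_subset_right
    intro ξ hξ
    refine ⟨fun i hi => ?_, hξ⟩
    rw [hξ i (lt_of_lt_of_le hi hmm), ← hξ₀f' i (lt_of_lt_of_le hi hmm), hξ₀f i hi]
  · refine ⟨m, f, ?_⟩
    apply Set.eq_of_subset_of_subset Set.inter_subset_left
    intro ξ hξ
    refine ⟨hξ, fun i hi => ?_⟩
    rw [hξ i (lt_of_lt_of_le hi hmm), ← hξ₀f i (lt_of_lt_of_le hi hmm), hξ₀f' i hi]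

lemma pi_eq_generateFrom_cyl :
    (MeasurableSpace.pi : MeasurableSpace (ℕ → Fin r)) =
      MeasurableSpace.generateFrom {A : Set (ℕ → Fin r) | ∃ m f, A = Cyl m f} := by
  apply le_antisymm
  · have hrfl : (MeasurableSpace.pi : MeasurableSpace (ℕ → Fin r)) =
        ⨆ i : ℕ, MeasurableSpace.comap (fun ξ : ℕ → Fin r => ξ i) inferInstance := rfl
    rw [hrfl]
    refine iSup_le fun i => Measurable.comap_le ?_
    refine @measurable_to_countable' (Fin r) (ℕ → Fin r) _ _
      (MeasurableSpace.generateFrom {A : Set (ℕ → Fin r) | ∃ m f, A = Cyl m f})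
      (fun ξ => ξ i) fun c => ?_
    have heq : (fun ξ : ℕ → Fin r => ξ i) ⁻¹' {c} =
        ⋃ (f : Fin (i + 1) → Fin r) (_ : f ⟨i, Nat.lt_succ_self i⟩ = c),
          Cyl (i + 1) (fun n => if h : n < i + 1 then f ⟨n, h⟩ else c) := by
      ext ξ
      simp only [Set.mem_preimage, Set.mem_singleton_iff, Set.mem_iUnion]
      constructor
      · intro hξ
        refine ⟨fun j => ξ j, hξ, fun n hn => ?_⟩
        simp [hn]
      · rintro ⟨f, hfc, hmem⟩
        have := hmem i (Nat.lt_succ_self i)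
        simpa [hfc] using this
    rw [heq]
    exact MeasurableSet.iUnion fun f => MeasurableSet.iUnion fun hf =>
      MeasurableSpace.measurableSet_generateFrom ⟨_, _, rfl⟩
  · refine MeasurableSpace.generateFrom_le ?_
    rintro _ ⟨m, f, rfl⟩
    exact measurableSet_cyl m f

lemma measure_ext_cyl (ν₁ ν₂ : Measure (ℕ → Fin r)) [IsFiniteMeasure ν₁]
    (h : ∀ m f, ν₁ (Cyl m f) = ν₂ (Cyl m f)) (hu : ν₁ Set.univ = ν₂ Set.univ) :
    ν₁ = ν₂ :=
  MeasureTheory.ext_of_generate_finite _ pi_eq_generateFrom_cyl cylSet_piSystem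
    (by rintro _ ⟨m, f, rfl⟩; exact h m f) hu

/-! ### Independence / Markov property -/

lemma shift_indep (p : Fin r → ℝ≥0∞) (μ : Measure (ℕ → Fin r)) [IsProbabilityMeasure μ]
    (hiid : ∀ (m : ℕ) (f : ℕ → Fin r),
      μ {ξ | ∀ i < m, ξ i = f i} = ∏ i ∈ Finset.range m, p (f i))
    (k : ℕ) (f : ℕ → Fin r) {g : (ℕ → Fin r) → ℝ≥0∞} (hg : Measurable g) :
    ∫⁻ ξ in Cyl k f, g (fun n => ξ (k + n)) ∂μ = μ (Cyl k f) * ∫⁻ ξ, g ξ ∂μ := by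
  have mθ : Measurable (fun (ξ : ℕ → Fin r) (n : ℕ) => ξ (k + n)) :=
    measurable_pi_lambda _ fun n => measurable_pi_apply (k + n)
  set ρ := Measure.map (fun (ξ : ℕ → Fin r) (n : ℕ) => ξ (k + n)) (μ.restrict (Cyl k f)) with hρ
  haveI : IsFiniteMeasure ρ := Measure.isFiniteMeasure_map _ _
  have hρeq : ρ = μ (Cyl k f) • μ := by
    refine measure_ext_cyl _ _ ?_ ?_
    · intro m f'
      rw [hρ, Measure.map_apply mθ (measurableSet_cyl m f'),
        Measure.restrict_apply (mθ (measurableSet_cyl m f'))]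
      have hset : (fun (ξ : ℕ → Fin r) (n : ℕ) => ξ (k + n)) ⁻¹' Cyl m f' ∩ Cyl k f
          = Cyl (k + m) (fun n => if n < k then f n else f' (n - k)) := by
        ext ξ
        simp only [Cyl, Set.mem_inter_iff, Set.mem_preimage, Set.mem_setOf_eq]
        constructor
        · rintro ⟨h1, h2⟩ i hi
          by_cases hik : i < k
          · simp only [hik, if_true]
            exact h2 i hik
          · have hi' : i - k < m := by omega
            have := h1 (i - k) hi'
            simp only [hik, if_false]
            rw [← this]
            congr 1
            omega
        · intro h1
          constructor
          · intro i hi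
            have := h1 (k + i) (by omega)
            simpa [show ¬(k + i < k) by omega] using this
          · intro i hi
            simpa [hi] using h1 i (by omega)
      rw [hset]
      have h1 := hiid (k + m) (fun n => if n < k then f n else f' (n - k))
      have h2 := hiid k f
      have h3 := hiid m f'
      have hCyl1 : Cyl (k + m) (fun n => if n < k then f n else f' (n - k))
          = {ξ : ℕ → Fin r | ∀ i < k + m, ξ i = if i < k then f i else f' (i - k)} := rfl
      rw [hCyl1, h1, Finset.prod_range_add]
      have hfst : ∀ i ∈ Finset.range k,
          p (if i < k then f i else f' (i - k)) = p (f i) := by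
        intro i hi
        rw [Finset.mem_range] at hi
        simp [hi]
      have hsnd : ∀ i ∈ Finset.range m,
          p (if k + i < k then f (k + i) else f' (k + i - k)) = p (f' i) := by
        intro i _
        have h4 : ¬(k + i < k) := by omega
        simp [h4]
      rw [Finset.prod_congr rfl hfst, Finset.prod_congr rfl hsnd]
      have hCyl2 : Cyl k f = {ξ : ℕ → Fin r | ∀ i < k, ξ i = f i} := rfl
      have hCyl3 : Cyl m f' = {ξ : ℕ → Fin r | ∀ i < m, ξ i = f' i} := rfl
      rw [Measure.smul_apply, smul_eq_mul, hCyl2, hCyl3, h2, h3]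
    · rw [hρ, Measure.map_apply mθ MeasurableSet.univ, Set.preimage_univ,
        Measure.restrict_apply_univ, Measure.smul_apply, smul_eq_mul, measure_univ, mul_one]
  calc ∫⁻ ξ in Cyl k f, g (fun n => ξ (k + n)) ∂μ
      = ∫⁻ x, g x ∂ρ := (lintegral_map hg mθ).symm
    _ = μ (Cyl k f) * ∫⁻ ξ, g ξ ∂μ := by rw [hρeq, lintegral_smul_measure, smul_eq_mul]

lemma shift_indep' [NeZero r] (p : Fin r → ℝ≥0∞) (μ : Measure (ℕ → Fin r))
    [IsProbabilityMeasure μ]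
    (hiid : ∀ (m : ℕ) (f : ℕ → Fin r),
      μ {ξ | ∀ i < m, ξ i = f i} = ∏ i ∈ Finset.range m, p (f i))
    (k : ℕ) (A : Set (ℕ → Fin r))
    (hA : ∀ ξ η : ℕ → Fin r, (∀ i < k, ξ i = η i) → (ξ ∈ A ↔ η ∈ A)) :
    MeasurableSet A ∧ ∀ g : (ℕ → Fin r) → ℝ≥0∞, Measurable g →
      ∫⁻ ξ in A, g (fun n => ξ (k + n)) ∂μ = μ A * ∫⁻ ξ, g ξ ∂μ := by
  classical
  set ext : (Fin k → Fin r) → (ℕ → Fin r) :=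
    fun f n => if h : n < k then f ⟨n, h⟩ else 0 with hext
  set B : (Fin k → Fin r) → Set (ℕ → Fin r) := fun f => A ∩ Cyl k (ext f) with hB
  have hBeq : ∀ f, B f = if ext f ∈ A then Cyl k (ext f) else ∅ := by
    intro f
    by_cases hf : ext f ∈ A
    · simp only [hf, if_true, hB]
      apply Set.eq_of_subset_of_subset Set.inter_subset_right
      intro ξ hξ
      exact ⟨(hA (ext f) ξ fun i hi => (hξ i hi).symm).mp hf, hξ⟩
    · simp only [hf, if_false, hB]
      rw [Set.eq_empty_iff_forall_notMem]
      rintro ξ ⟨hξA, hξC⟩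
      exact hf ((hA ξ (ext f) fun i hi => hξC i hi).mp hξA)
  have hBmeas : ∀ f, MeasurableSet (B f) := by
    intro f
    rw [hBeq]
    split_ifs
    · exact measurableSet_cyl _ _
    · exact MeasurableSet.empty
  have hcov : (⋃ f : Fin k → Fin r, Cyl k (ext f)) = Set.univ := by
    apply Set.eq_univ_of_forall
    intro ξ
    refine Set.mem_iUnion.mpr ⟨fun i => ξ i, fun i hi => ?_⟩
    simp [hext, hi]
  have hAun : A = ⋃ f, B f := by
    simp only [hB]
    rw [← Set.inter_iUnion, hcov, Set.inter_univ]
  have hdisj : Pairwise (Function.onFun Disjoint B) := by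
    intro f f' hff'
    rw [Function.onFun, Set.disjoint_left]
    rintro ξ ⟨_, h1⟩ ⟨_, h2⟩
    apply hff'
    funext i
    have e1 := h1 i i.2
    have e2 := h2 i i.2
    rw [e1] at e2
    simpa [hext, i.2] using e2
  have hAmeas : MeasurableSet A := by
    rw [hAun]; exact MeasurableSet.iUnion hBmeas
  refine ⟨hAmeas, fun g hg => ?_⟩
  have hAun' : A = ⋃ f, B f := hAun
  calc ∫⁻ ξ in A, g (fun n => ξ (k + n)) ∂μ
      = ∑' f : Fin k → Fin r, ∫⁻ ξ in B f, g (fun n => ξ (k + n)) ∂μ := by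
        rw [hAun', lintegral_iUnion hBmeas hdisj]
    _ = ∑' f : Fin k → Fin r, μ (B f) * ∫⁻ ξ, g ξ ∂μ := by
        refine tsum_congr fun f => ?_
        rw [hBeq f]
        split_ifs
        · exact shift_indep p μ hiid k (ext f) hg
        · simp
    _ = μ A * ∫⁻ ξ, g ξ ∂μ := by
        rw [ENNReal.tsum_mul_right, ← measure_iUnion hdisj hBmeas, ← hAun']

/-! ### Structure of waiting times under prefix decomposition -/

lemma Splus_agree {w : List (Fin r)} {ξ η : ℕ → Fin r} {k k' : ℕ} (hk' : k' ≤ k)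
    (hag : ∀ i < k, ξ i = η i) : k' ∈ Splus w ξ ↔ k' ∈ Splus w η := by
  simp only [Splus, Set.mem_setOf_eq]
  refine and_congr_right fun hL => ?_
  constructor <;> intro H j hj
  · rw [← hag (k' - w.length + j) (by omega)]
    exact H j hj
  · rw [hag (k' - w.length + j) (by omega)]
    exact H j hj

lemma waitTime_agree {w : List (Fin r)} {ξ η : ℕ → Fin r} {k : ℕ}
    (hag : ∀ i < k, ξ i = η i) (h : waitTime w ξ = (k : ℝ≥0∞)) :
    waitTime w η = (k : ℝ≥0∞) := by
  obtain ⟨h1, h2⟩ := waitTime_coe_iff.mp h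
  refine waitTime_coe_iff.mpr ⟨(Splus_agree le_rfl hag).mp h1, fun k' hk' hmem => ?_⟩
  exact h2 k' hk' ((Splus_agree (le_of_lt hk') hag).mpr hmem)

lemma mem_Splus_prefix {w₁ w₂ : List (Fin r)} {ξ : ℕ → Fin r} {m : ℕ}
    (hm : m ∈ Splus (w₁ ++ w₂) ξ) : m - w₂.length ∈ Splus w₁ ξ := by
  obtain ⟨hmL, hocc⟩ := hm
  rw [List.length_append] at hmL
  refine ⟨by omega, fun j hj => ?_⟩
  have hj' : j < (w₁ ++ w₂).length := by rw [List.length_append]; omega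
  have hocc' := hocc j hj'
  have hidx : m - w₂.length - w₁.length + j = m - (w₁ ++ w₂).length + j := by
    rw [List.length_append]; omega
  rw [hidx, hocc']
  simp only [List.get_eq_getElem]
  exact List.getElem_append_left hj

lemma waitTime_prefix_decomp {w₁ w₂ : List (Fin r)} {ξ : ℕ → Fin r} {k : ℕ}
    (hk : waitTime w₁ ξ = (k : ℝ≥0∞)) :
    waitTime (w₁ ++ w₂) ξ
      = ((k - w₁.length : ℕ) : ℝ≥0∞)
        + waitTime (w₁ ++ w₂) (prepend w₁ (fun n => ξ (k + n))) := by
  obtain ⟨hkS, hkmin⟩ := waitTime_coe_iff.mp hk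
  obtain ⟨hLk, hpre⟩ := hkS
  set L := w₁.length with hLdef
  set η := prepend w₁ (fun n => ξ (k + n)) with hηdef
  have hwlen : (w₁ ++ w₂).length = L + w₂.length := by
    rw [List.length_append]
  have hηeq : ∀ n, η n = ξ (k - L + n) := by
    intro n
    by_cases hn : n < L
    · have h1 := hpre n hn
      simp only [hηdef, prepend, show n < w₁.length from hn, dif_pos]
      exact h1.symm
    · simp only [hηdef, prepend, show ¬ n < w₁.length from hn, dif_neg, not_false_iff]
      congr 1
      omega
  have hfwd : ∀ m ∈ Splus (w₁ ++ w₂) ξ, k - L + (w₁ ++ w₂).length ≤ m ∧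
      m - (k - L) ∈ Splus (w₁ ++ w₂) η := by
    intro m hm
    obtain ⟨hmL, hocc⟩ := hm
    have hmem := mem_Splus_prefix (w₁ := w₁) (w₂ := w₂) ⟨hmL, hocc⟩
    have hge : k ≤ m - w₂.length := by
      by_contra hlt
      exact hkmin _ (by omega) hmem
    have hmk : k + w₂.length ≤ m := by
      rw [hwlen] at hmL
      omega
    constructor
    · omega
    · refine ⟨by omega, fun j hj => ?_⟩
      rw [hηeq]
      have hidx : k - L + (m - (k - L) - (w₁ ++ w₂).length + j)
          = m - (w₁ ++ w₂).length + j := by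
        rw [hwlen] at *
        omega
      rw [hidx]
      exact hocc j hj
  have hbwd : ∀ m' ∈ Splus (w₁ ++ w₂) η, m' + (k - L) ∈ Splus (w₁ ++ w₂) ξ := by
    intro m' hm'
    obtain ⟨hm'L, hocc'⟩ := hm'
    refine ⟨by omega, fun j hj => ?_⟩
    have hidx : m' + (k - L) - (w₁ ++ w₂).length + j
        = k - L + (m' - (w₁ ++ w₂).length + j) := by
      omega
    rw [hidx, ← hηeq]
    exact hocc' j hj
  rcases Set.eq_empty_or_nonempty (Splus (w₁ ++ w₂) η) with he | hne
  · have heξ : Splus (w₁ ++ w₂) ξ = ∅ := by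
      rw [Set.eq_empty_iff_forall_notMem]
      intro m hm
      have := (hfwd m hm).2
      rw [he] at this
      exact this
    rw [waitTime_eq_top_iff.mpr he, waitTime_eq_top_iff.mpr heξ]
    simp
  · set m₀ := sInf (Splus (w₁ ++ w₂) η) with hm₀
    have hm₀mem : m₀ ∈ Splus (w₁ ++ w₂) η := Nat.sInf_mem hne
    rw [waitTime_eq_coe hne, ← hm₀]
    rw [← Nat.cast_add]
    apply waitTime_coe_iff.mpr
    constructor
    · have := hbwd m₀ hm₀mem
      rwa [add_comm] at this
    · intro m hmlt hmem
      obtain ⟨hge, hmem'⟩ := hfwd m hmem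
      have hle := Nat.sInf_le hmem'
      rw [← hm₀] at hle
      omega

end Stmt4Aux

open Stmt4Aux in
theorem statement_4 {r : ℕ} (hr : 2 ≤ r) (p : Fin r → ℝ≥0∞)
    (hp1 : ∑ x, p x = 1) (hpos : ∀ x, 0 < p x)
    (μ : Measure (ℕ → Fin r)) [IsProbabilityMeasure μ]
    (hiid : ∀ (m : ℕ) (f : ℕ → Fin r),
      μ {ξ | ∀ i < m, ξ i = f i} = ∏ i ∈ Finset.range m, p (f i))
    (w w₁ w₂ : List (Fin r)) (h : w = w₁ ++ w₂) :
    Ew μ w = condEw μ w w₁ + Ew μ w₁ := by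
  classical
  subst h
  haveI : NeZero r := ⟨by omega⟩
  set G : (ℕ → Fin r) → ℝ≥0∞ := fun η => waitTime (w₁ ++ w₂) (prepend w₁ η) with hG
  have hGmeas : Measurable G := (measurable_waitTime _).comp (measurable_prepend w₁)
  set C : ℝ≥0∞ := ∫⁻ ξ, G ξ ∂μ with hC
  have hcond : condEw μ (w₁ ++ w₂) w₁ = C - w₁.length := rfl
  have hLC : (w₁.length : ℝ≥0∞) ≤ C := by
    calc (w₁.length : ℝ≥0∞) = ∫⁻ _, (w₁.length : ℝ≥0∞) ∂μ := by
          rw [lintegral_const, measure_univ, mul_one]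
      _ ≤ C := by
          refine lintegral_mono fun η => ?_
          refine le_trans ?_ (waitTime_ge (w₁ ++ w₂) (prepend w₁ η))
          exact_mod_cast Nat.cast_le.mpr (by rw [List.length_append]; omega)
  set A : ℕ → Set (ℕ → Fin r) := fun k => {ξ | waitTime w₁ ξ = (k : ℝ≥0∞)} with hA
  have hAinv : ∀ k, ∀ ξ η : ℕ → Fin r, (∀ i < k, ξ i = η i) → (ξ ∈ A k ↔ η ∈ A k) := by
    intro k ξ η hag
    constructor
    · exact fun h1 => waitTime_agree hag h1
    · exact fun h1 => waitTime_agree (fun i hi => (hag i hi).symm) h1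
  have hspec := fun k => shift_indep' p μ hiid k (A k) (hAinv k)
  have hAmeas : ∀ k, MeasurableSet (A k) := fun k => (hspec k).1
  have hAint : ∀ k, ∫⁻ ξ in A k, G (fun n => ξ (k + n)) ∂μ = μ (A k) * C :=
    fun k => (hspec k).2 G hGmeas
  have hdisj : Pairwise (Function.onFun Disjoint A) := by
    intro k k' hkk'
    rw [Function.onFun, Set.disjoint_left]
    intro ξ h1 h2
    have e1 : waitTime w₁ ξ = (k : ℝ≥0∞) := h1
    have e2 : waitTime w₁ ξ = (k' : ℝ≥0∞) := h2
    exact hkk' (Nat.cast_injective (e1.symm.trans e2))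
  set U : Set (ℕ → Fin r) := ⋃ k, A k with hU
  have hUmeas : MeasurableSet U := MeasurableSet.iUnion hAmeas
  have hUc : Uᶜ = {ξ | waitTime w₁ ξ = ⊤} := by
    ext ξ
    simp only [hU, Set.mem_compl_iff, Set.mem_iUnion, not_exists, Set.mem_setOf_eq, hA]
    constructor
    · intro hne
      by_contra htop
      obtain ⟨k, hk⟩ := waitTime_ne_top htop
      exact hne k hk
    · intro htop k hk
      rw [htop] at hk
      exact (ENNReal.natCast_ne_top k) hk.symm
  have hUcw : ∀ ξ ∈ Uᶜ, waitTime (w₁ ++ w₂) ξ = ⊤ := by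
    intro ξ hξ
    rw [hUc] at hξ
    have h1 : Splus w₁ ξ = ∅ := waitTime_eq_top_iff.mp hξ
    apply waitTime_eq_top_iff.mpr
    rw [Set.eq_empty_iff_forall_notMem]
    intro m hm
    have := mem_Splus_prefix hm
    rw [h1] at this
    exact this
  by_cases hUc0 : μ Uᶜ = 0
  · -- main case : `w₁` occurs a.s.
    have hmuU : μ U = 1 := by
      have h1 : μ U + μ Uᶜ = 1 := by
        rw [measure_add_measure_compl hUmeas, measure_univ]
      simpa [hUc0] using h1
    have hsplit : ∀ F : (ℕ → Fin r) → ℝ≥0∞,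
        ∫⁻ ξ, F ξ ∂μ = ∑' k : ℕ, ∫⁻ ξ in A k, F ξ ∂μ := by
      intro F
      rw [← lintegral_add_compl F hUmeas]
      have h2 : ∫⁻ ξ in Uᶜ, F ξ ∂μ = 0 := by
        rw [Measure.restrict_eq_zero.mpr hUc0, lintegral_zero_measure]
      rw [h2, add_zero, hU, lintegral_iUnion hAmeas hdisj]
    have hEw1 : Ew μ w₁ = ∑' k : ℕ, (k : ℝ≥0∞) * μ (A k) := by
      rw [Ew, hsplit]
      refine tsum_congr fun k => ?_
      rw [setLIntegral_congr_fun (f := waitTime w₁) (g := fun _ => (k : ℝ≥0∞)) (hAmeas k)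
        (fun ξ hξ => hξ), setLIntegral_const]
    have hEw : Ew μ (w₁ ++ w₂)
        = ∑' k : ℕ, (((k - w₁.length : ℕ) : ℝ≥0∞) * μ (A k) + μ (A k) * C) := by
      rw [Ew, hsplit]
      refine tsum_congr fun k => ?_
      have hcong : ∫⁻ ξ in A k, waitTime (w₁ ++ w₂) ξ ∂μ
          = ∫⁻ ξ in A k, (((k - w₁.length : ℕ) : ℝ≥0∞) + G (fun n => ξ (k + n))) ∂μ :=
        setLIntegral_congr_fun (hAmeas k)
          (fun ξ hξ => waitTime_prefix_decomp hξ)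
      rw [hcong, lintegral_add_left measurable_const, setLIntegral_const, hAint k]
    have hAzero : ∀ k < w₁.length, μ (A k) = 0 := by
      intro k hk
      have hempty : A k = ∅ := by
        rw [Set.eq_empty_iff_forall_notMem]
        intro ξ hξ
        have := (waitTime_coe_iff.mp (hξ : waitTime w₁ ξ = (k : ℝ≥0∞))).1.1
        omega
      rw [hempty]
      exact measure_empty
    have hsum1 : ∑' k : ℕ, μ (A k) = 1 := by
      rw [← measure_iUnion hdisj hAmeas, ← hU, hmuU]
    rw [hEw, hcond, hEw1, ENNReal.tsum_add, ENNReal.tsum_mul_right, hsum1, one_mul]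
    have hks : ∑' k : ℕ, (k : ℝ≥0∞) * μ (A k)
        = (∑' k : ℕ, ((k - w₁.length : ℕ) : ℝ≥0∞) * μ (A k)) + (w₁.length : ℝ≥0∞) := by
      have hterm : ∀ k : ℕ, (k : ℝ≥0∞) * μ (A k)
          = ((k - w₁.length : ℕ) : ℝ≥0∞) * μ (A k) + (w₁.length : ℝ≥0∞) * μ (A k) := by
        intro k
        by_cases hk : w₁.length ≤ k
        · rw [← add_mul, ← Nat.cast_add]
          congr 2
          omega
        · rw [hAzero k (by omega)]
          simp
      rw [tsum_congr hterm, ENNReal.tsum_add, ENNReal.tsum_mul_left, hsum1, mul_one]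
    rw [hks]
    rw [add_comm (∑' k : ℕ, ((k - w₁.length : ℕ) : ℝ≥0∞) * μ (A k)) ((w₁.length : ℝ≥0∞)),
      ← add_assoc, tsub_add_cancel_of_le hLC, add_comm]
  · -- degenerate case : `w₁` fails to occur with positive probability
    have h1 : Ew μ w₁ = ⊤ := by
      have hint : ∫⁻ ξ in Uᶜ, waitTime w₁ ξ ∂μ = ⊤ := by
        rw [setLIntegral_congr_fun (f := waitTime w₁) (g := fun _ => (⊤ : ℝ≥0∞)) hUmeas.compl
          (fun ξ hξ => by rw [hUc] at hξ; exact hξ), setLIntegral_const]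
        exact ENNReal.top_mul hUc0
      exact eq_top_iff.mpr (hint ▸ setLIntegral_le_lintegral Uᶜ (waitTime w₁))
    have h2 : Ew μ (w₁ ++ w₂) = ⊤ := by
      have hint : ∫⁻ ξ in Uᶜ, waitTime (w₁ ++ w₂) ξ ∂μ = ⊤ := by
        rw [setLIntegral_congr_fun (f := waitTime (w₁ ++ w₂)) (g := fun _ => (⊤ : ℝ≥0∞))
          hUmeas.compl (fun ξ hξ => hUcw ξ hξ), setLIntegral_const]
        exact ENNReal.top_mul hUc0
      exact eq_top_iff.mpr (hint ▸ setLIntegral_le_lintegral Uᶜ (waitTime (w₁ ++ w₂)))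
    rw [h1, h2, add_top]
end

section
/- For every finite word w of length n ≥ 1, E(w) = E(w[1,n−1]) + 1 + Σ_{y ≠ w(n)} p(y) E(w | w[1,n−1]y), where w[1,n−1] is the prefix of w of length n−1 (the empty word if n = 1). -/
open MeasureTheory ENNReal

namespace Aux


variable {r : ℕ}

def occ (w : List (Fin r)) (ξ : ℕ → Fin r) (k : ℕ) : Prop :=
  w.length ≤ k ∧ ∀ j : ℕ, (hj : j < w.length) → ξ (k - w.length + j) = w.get ⟨j, hj⟩

open Classical in
theorem waitTime_eq_iInf (w : List (Fin r)) (ξ : ℕ → Fin r) :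
    waitTime w ξ = ⨅ k : ℕ, if occ w ξ k then (k : ℝ≥0∞) else ⊤ := by
  apply le_antisymm
  · refine le_iInf fun k => ?_
    split_ifs with h
    · exact sInf_le ⟨k, rfl, h.1, h.2⟩
    · exact le_top
  · refine le_sInf fun t ht => ?_
    obtain ⟨k, rfl, h1, h2⟩ := ht
    refine iInf_le_of_le k ?_
    rw [if_pos ⟨h1, h2⟩]

theorem le_waitTime (w : List (Fin r)) (ξ : ℕ → Fin r) :
    (w.length : ℝ≥0∞) ≤ waitTime w ξ := by
  rw [waitTime_eq_iInf]
  refine le_iInf fun k => ?_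
  split_ifs with h
  · exact_mod_cast h.1
  · exact le_top

theorem waitTime_le_of_occ {w : List (Fin r)} {ξ : ℕ → Fin r} {k : ℕ} (h : occ w ξ k) :
    waitTime w ξ ≤ k := by
  rw [waitTime_eq_iInf]
  refine iInf_le_of_le k ?_
  rw [if_pos h]

theorem occ_of_waitTime_eq {w : List (Fin r)} {ξ : ℕ → Fin r} {k : ℕ}
    (h : waitTime w ξ = k) : occ w ξ k ∧ ∀ m, occ w ξ m → k ≤ m := by
  classical
  have hex : ∃ m, occ w ξ m := by
    by_contra hc
    push_neg at hc
    rw [waitTime_eq_iInf] at h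
    simp only [hc, if_false, iInf_top] at h
    exact absurd h (by simp)
  obtain ⟨m₀, hm₀⟩ := hex
  have hfind := Nat.find_spec ⟨m₀, hm₀⟩
  set k₀ := Nat.find ⟨m₀, hm₀⟩ with hk₀
  have : waitTime w ξ = k₀ := by
    apply le_antisymm (waitTime_le_of_occ hfind)
    rw [waitTime_eq_iInf]
    refine le_iInf fun m => ?_
    split_ifs with hm
    · exact_mod_cast Nat.find_le hm
    · exact le_top
  rw [h] at this
  have hkk : k = k₀ := by exact_mod_cast this
  subst hkk
  exact ⟨hfind, fun m hm => Nat.find_le hm⟩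

theorem exists_waitTime_eq {w : List (Fin r)} {ξ : ℕ → Fin r} (h : waitTime w ξ ≠ ⊤) :
    ∃ k : ℕ, waitTime w ξ = k := by
  classical
  have hex : ∃ m, occ w ξ m := by
    by_contra hc
    push_neg at hc
    rw [waitTime_eq_iInf] at h
    simp only [hc, if_false, iInf_top] at h
    exact h rfl
  obtain ⟨m₀, hm₀⟩ := hex
  refine ⟨Nat.find ⟨m₀, hm₀⟩, ?_⟩
  apply le_antisymm (waitTime_le_of_occ (Nat.find_spec ⟨m₀, hm₀⟩))
  rw [waitTime_eq_iInf]
  refine le_iInf fun m => ?_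
  split_ifs with hm
  · exact_mod_cast Nat.find_le hm
  · exact le_top



variable {r : ℕ}

def cyl (m : ℕ) (f : ℕ → Fin r) : Set (ℕ → Fin r) := {ξ | ∀ i < m, ξ i = f i}

def cylSet (r : ℕ) : Set (Set (ℕ → Fin r)) := {S | ∃ m f, S = cyl m f}

theorem measurableSet_cyl (m : ℕ) (f : ℕ → Fin r) : MeasurableSet (cyl m f) := by
  have : cyl m f = ⋂ (i : ℕ), ⋂ (_ : i < m), {ξ : ℕ → Fin r | ξ i = f i} := by
    ext ξ; simp [cyl]
  rw [this]
  refine MeasurableSet.iInter fun i => MeasurableSet.iInter fun _ => ?_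
  show MeasurableSet ((fun ξ : ℕ → Fin r => ξ i) ⁻¹' {f i})
  exact measurable_pi_apply i (measurableSet_singleton _)

theorem cyl_inter_of_le {m m' : ℕ} {f f' : ℕ → Fin r} (h : m ≤ m')
    (hne : (cyl m f ∩ cyl m' f').Nonempty) : cyl m f ∩ cyl m' f' = cyl m' f' := by
  obtain ⟨ξ₀, h1, h2⟩ := hne
  apply Set.inter_eq_self_of_subset_right
  intro η hη i hi
  rw [hη i (lt_of_lt_of_le hi h), ← h2 i (lt_of_lt_of_le hi h), h1 i hi]

theorem isPiSystem_cyl : IsPiSystem (cylSet r) := by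
  rintro S ⟨m, f, rfl⟩ T ⟨m', f', rfl⟩ hne
  rcases le_total m m' with h | h
  · rw [cyl_inter_of_le h hne]; exact ⟨m', f', rfl⟩
  · rw [Set.inter_comm] at hne ⊢
    rw [cyl_inter_of_le h hne]; exact ⟨m, f, rfl⟩

theorem generateFrom_cyl :
    (inferInstance : MeasurableSpace (ℕ → Fin r)) = MeasurableSpace.generateFrom (cylSet r) := by
  apply le_antisymm
  · show MeasurableSpace.pi ≤ _
    refine iSup_le fun i => ?_
    rw [MeasurableSpace.comap_le_iff_le_map]
    intro s _
    show MeasurableSet[MeasurableSpace.generateFrom (cylSet r)] ((fun ξ : ℕ → Fin r => ξ i) ⁻¹' s)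
    have hs : (fun ξ : ℕ → Fin r => ξ i) ⁻¹' s = ⋃ (c : Fin r), ⋃ (_ : c ∈ s),
        {ξ : ℕ → Fin r | ξ i = c} := by
      ext ξ; simp
    rw [hs]
    refine MeasurableSet.iUnion fun c => MeasurableSet.iUnion fun _ => ?_
    have h2 : {ξ : ℕ → Fin r | ξ i = c} = ⋃ (g : Fin (i+1) → Fin r)
        (_ : g ⟨i, Nat.lt_succ_self i⟩ = c),
        cyl (i+1) (fun j => if h : j < i + 1 then g ⟨j, h⟩ else c) := by
      ext ξ
      constructor
      · intro hξ
        refine Set.mem_iUnion.2 ⟨fun j => ξ j, Set.mem_iUnion.2 ⟨hξ, ?_⟩⟩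
        intro j hj
        simp [hj]
      · intro hξ
        obtain ⟨g, hg, hmem⟩ := by
          simpa using hξ
        have := hmem i (Nat.lt_succ_self i)
        simpa [hg] using this
    rw [h2]
    refine MeasurableSet.iUnion fun g => MeasurableSet.iUnion fun _ => ?_
    exact MeasurableSpace.measurableSet_generateFrom ⟨_, _, rfl⟩
  · exact MeasurableSpace.generateFrom_le (by rintro S ⟨m, f, rfl⟩; exact measurableSet_cyl m f)

def shift (m : ℕ) (ξ : ℕ → Fin r) : ℕ → Fin r := fun j => ξ (m + j)

theorem measurable_shift (m : ℕ) : Measurable (shift (r := r) m) :=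
  measurable_pi_lambda _ fun j => measurable_pi_apply (m + j)

/-- `S` is determined by the first `m` coordinates. -/
def DetBy (S : Set (ℕ → Fin r)) (m : ℕ) : Prop :=
  ∀ ξ η : ℕ → Fin r, (∀ i < m, ξ i = η i) → ξ ∈ S → η ∈ S

section Det

variable [NeZero r]

def extFn (m : ℕ) (g : Fin m → Fin r) : ℕ → Fin r :=
  fun j => if h : j < m then g ⟨j, h⟩ else default

theorem detBy_eq_biUnion {S : Set (ℕ → Fin r)} {m : ℕ} (hS : DetBy S m) :
    S = ⋃ (g : Fin m → Fin r) (_ : extFn m g ∈ S), cyl m (extFn m g) := by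
  ext ξ
  constructor
  · intro hξ
    refine Set.mem_iUnion.2 ⟨fun j => ξ j, Set.mem_iUnion.2 ⟨?_, ?_⟩⟩
    · refine hS ξ _ (fun i hi => ?_) hξ
      simp [extFn, hi]
    · intro i hi; simp [extFn, hi]
  · intro hξ
    obtain ⟨g, hg, hmem⟩ := by simpa using hξ
    refine hS (extFn m g) ξ (fun i hi => (hmem i hi).symm) hg

theorem cyl_disjoint {m : ℕ} {g g' : Fin m → Fin r} (h : g ≠ g') :
    Disjoint (cyl m (extFn m g)) (cyl m (extFn m g')) := by
  rw [Set.disjoint_left]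
  intro ξ h1 h2
  apply h
  funext i
  have e1 := h1 i i.2
  have e2 := h2 i i.2
  simp only [extFn, i.2, dif_pos] at e1 e2
  rw [← e1, e2]

theorem measurableSet_of_detBy {S : Set (ℕ → Fin r)} {m : ℕ} (hS : DetBy S m) :
    MeasurableSet S := by
  rw [detBy_eq_biUnion hS]
  exact MeasurableSet.iUnion fun g => MeasurableSet.iUnion fun _ => measurableSet_cyl _ _

end Det

section Indep

variable (μ : Measure (ℕ → Fin r)) [IsProbabilityMeasure μ] (p : Fin r → ℝ≥0∞)
variable (hiid : ∀ (m : ℕ) (f : ℕ → Fin r),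
      μ {ξ | ∀ i < m, ξ i = f i} = ∏ i ∈ Finset.range m, p (f i))

include hiid

theorem mu_cyl (m : ℕ) (f : ℕ → Fin r) : μ (cyl m f) = ∏ i ∈ Finset.range m, p (f i) :=
  hiid m f

theorem indep_cyl (m : ℕ) (f : ℕ → Fin r) {B : Set (ℕ → Fin r)} (hB : MeasurableSet B) :
    μ (cyl m f ∩ shift m ⁻¹' B) = μ (cyl m f) * μ B := by
  have key : Measure.map (shift m) (μ.restrict (cyl m f)) = μ (cyl m f) • μ := by
    refine ext_of_generate_finite (cylSet r) generateFrom_cyl isPiSystem_cyl ?_ ?_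
    · rintro T ⟨m', f', rfl⟩
      rw [Measure.map_apply (measurable_shift m) (measurableSet_cyl m' f'),
        Measure.restrict_apply (((measurable_shift m) (measurableSet_cyl m' f'))),
        Measure.smul_apply, smul_eq_mul]
      have hset : shift m ⁻¹' cyl m' f' ∩ cyl m f
          = cyl (m + m') (fun j => if j < m then f j else f' (j - m)) := by
        ext ξ
        simp only [Set.mem_inter_iff, Set.mem_preimage, cyl, Set.mem_setOf_eq, shift]
        constructor
        · rintro ⟨h1, h2⟩ j hj
          by_cases hjm : j < m
          · simp [hjm, h2 j hjm]
          · have : j - m < m' := by omega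
            have := h1 (j - m) this
            rw [if_neg hjm]
            rw [← this]
            congr 1
            omega
        · intro h
          constructor
          · intro i hi
            have := h (m + i) (by omega)
            rw [if_neg (by omega)] at this
            rw [this]
            congr 1
            omega
          · intro i hi
            have := h i (by omega)
            rwa [if_pos hi] at this
      rw [hset, mu_cyl μ p hiid, mu_cyl μ p hiid, mu_cyl μ p hiid, Finset.prod_range_add]
      congr 1
      · exact Finset.prod_congr rfl fun i hi => by
          simp at hi; rw [if_pos hi]
      · exact Finset.prod_congr rfl fun i hi => by
          rw [if_neg (by omega)]; congr 2; omega
    · rw [Measure.map_apply (measurable_shift m) MeasurableSet.univ]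
      simp [Measure.restrict_apply, measure_univ]
  have := congrArg (fun ν : Measure (ℕ → Fin r) => ν B) key
  simp only [Measure.smul_apply, smul_eq_mul] at this
  rw [Measure.map_apply (measurable_shift m) hB, Measure.restrict_apply ((measurable_shift m) hB)] at this
  rw [Set.inter_comm] at this
  exact this

theorem indep_detBy [NeZero r] {S : Set (ℕ → Fin r)} {m : ℕ} (hS : DetBy S m)
    {B : Set (ℕ → Fin r)} (hB : MeasurableSet B) :
    μ (S ∩ shift m ⁻¹' B) = μ S * μ B := by
  classical
  have hU : ∀ X : Set (ℕ → Fin r), MeasurableSet X →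
      μ (⋃ (g : Fin m → Fin r) (_ : extFn m g ∈ S), (cyl m (extFn m g) ∩ X))
      = ∑ g ∈ Finset.univ.filter (fun g : Fin m → Fin r => extFn m g ∈ S),
          μ (cyl m (extFn m g) ∩ X) := by
    intro X hX
    rw [show (⋃ (g : Fin m → Fin r) (_ : extFn m g ∈ S), (cyl m (extFn m g) ∩ X))
        = ⋃ g ∈ Finset.univ.filter (fun g : Fin m → Fin r => extFn m g ∈ S),
            (cyl m (extFn m g) ∩ X) by
      ext ξ; simp]
    refine measure_biUnion_finset ?_ fun g _ => (measurableSet_cyl _ _).inter hX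
    intro g _ g' _ hne
    exact (cyl_disjoint hne).mono Set.inter_subset_left Set.inter_subset_left
  have h1 := hU (shift m ⁻¹' B) ((measurable_shift m) hB)
  have hset2 : S ∩ shift m ⁻¹' B
      = ⋃ (g : Fin m → Fin r) (_ : extFn m g ∈ S), (cyl m (extFn m g) ∩ shift m ⁻¹' B) := by
    conv_lhs => rw [detBy_eq_biUnion hS]
    rw [Set.iUnion_inter]
    exact Set.iUnion_congr fun g => Set.iUnion_inter _ _
  rw [hset2, h1]
  have h2 : μ S = ∑ g ∈ Finset.univ.filter (fun g : Fin m → Fin r => extFn m g ∈ S),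
      μ (cyl m (extFn m g)) := by
    have h0 := hU Set.univ MeasurableSet.univ
    simp only [Set.inter_univ] at h0
    conv_lhs => rw [detBy_eq_biUnion hS]
    exact h0
  rw [h2, Finset.sum_mul]
  exact Finset.sum_congr rfl fun g _ => indep_cyl μ p hiid m (extFn m g) hB

end Indep


theorem detBy_occ (w : List (Fin r)) (k : ℕ) : DetBy {ξ : ℕ → Fin r | occ w ξ k} k := by
  intro ξ η hag h
  refine ⟨h.1, fun j hj => ?_⟩
  have h1 := h.1
  rw [← hag _ (by omega)]
  exact h.2 j hj

open Classical in
theorem measurable_waitTime [NeZero r] (w : List (Fin r)) : Measurable (waitTime w) := by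
  have : waitTime w = fun ξ => ⨅ k : ℕ, if occ w ξ k then (k : ℝ≥0∞) else ⊤ := by
    funext ξ; exact waitTime_eq_iInf w ξ
  rw [this]
  refine Measurable.iInf fun k => ?_
  exact Measurable.ite (measurableSet_of_detBy (detBy_occ w k)) measurable_const measurable_const

theorem measurable_prepend (v : List (Fin r)) : Measurable (prepend v) := by
  refine measurable_pi_lambda _ fun n => ?_
  unfold prepend
  by_cases h : n < v.length
  · simp only [h, dif_pos]; exact measurable_const
  · simp only [h, dif_neg, not_false_iff]; exact measurable_pi_apply _

theorem occ_congr {w : List (Fin r)} {ξ η : ℕ → Fin r} {m k : ℕ}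
    (hag : ∀ i < k, ξ i = η i) (hmk : m ≤ k) (h : occ w ξ m) : occ w η m := by
  refine ⟨h.1, fun j hj => ?_⟩
  have h1 := h.1
  rw [← hag _ (by omega)]
  exact h.2 j hj

theorem detBy_waitTime_eq (u : List (Fin r)) (k : ℕ) :
    DetBy {ξ : ℕ → Fin r | waitTime u ξ = (k : ℝ≥0∞)} k := by
  intro ξ η hag hξ
  obtain ⟨hocc, hmin⟩ := occ_of_waitTime_eq hξ
  show waitTime u η = (k : ℝ≥0∞)
  apply le_antisymm
  · exact waitTime_le_of_occ (occ_congr hag le_rfl hocc)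
  · rw [waitTime_eq_iInf]
    refine le_iInf fun m => ?_
    split_ifs with hm
    · by_cases hmk : m ≤ k
      · have : occ u ξ m := occ_congr (fun i hi => (hag i hi).symm) hmk hm
        exact_mod_cast hmin m this
      · exact_mod_cast (by omega : k ≤ m)
    · exact le_top

theorem occ_dropLast {w : List (Fin r)} (hw : w ≠ []) {ξ : ℕ → Fin r} {m : ℕ}
    (h : occ w ξ m) : occ w.dropLast ξ (m - 1) := by
  have hn : 1 ≤ w.length := List.length_pos_iff.2 hw
  have hlen : w.dropLast.length = w.length - 1 := List.length_dropLast
  have hm := h.1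
  refine ⟨by omega, fun j hj => ?_⟩
  have hj' : j < w.length - 1 := by omega
  have e1 : m - 1 - w.dropLast.length + j = m - w.length + j := by omega
  rw [e1, h.2 j (by omega)]
  simp only [List.get_eq_getElem, List.getElem_dropLast]

theorem le_of_occ {w : List (Fin r)} (hw : w ≠ []) {ξ : ℕ → Fin r} {m k : ℕ}
    (hk : waitTime w.dropLast ξ = (k : ℝ≥0∞)) (h : occ w ξ m) : k + 1 ≤ m := by
  have hn : 1 ≤ w.length := List.length_pos_iff.2 hw
  have h1 := occ_dropLast hw h
  have h2 := (occ_of_waitTime_eq hk).2 _ h1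
  have h3 := h.1
  omega

theorem waitTime_nplus {u : List (Fin r)} {ξ : ℕ → Fin r} {k : ℕ}
    (hk : waitTime u ξ = (k : ℝ≥0∞)) : u.length ≤ k := by
  have := le_waitTime u ξ
  rw [hk] at this
  exact_mod_cast this

theorem V1 {w : List (Fin r)} (hw : w ≠ []) {ξ : ℕ → Fin r} {k : ℕ}
    (hk : waitTime w.dropLast ξ = (k : ℝ≥0∞)) (ha : ξ k = w.getLast hw) :
    waitTime w ξ = ((k : ℝ≥0∞) + 1) := by
  have hn : 1 ≤ w.length := List.length_pos_iff.2 hw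
  have hlen : w.dropLast.length = w.length - 1 := List.length_dropLast
  have hk' : w.length - 1 ≤ k := by have := waitTime_nplus hk; omega
  have hoccu := (occ_of_waitTime_eq hk).1
  apply le_antisymm
  · have hocc : occ w ξ (k + 1) := by
      refine ⟨by omega, fun j hj => ?_⟩
      by_cases hj' : j < w.length - 1
      · have e : k + 1 - w.length + j = k - w.dropLast.length + j := by omega
        rw [e, hoccu.2 j (by omega)]
        simp only [List.get_eq_getElem, List.getElem_dropLast]
      · have hj2 : j = w.length - 1 := by omega
        subst hj2
        have e : k + 1 - w.length + (w.length - 1) = k := by omega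
        rw [e, ha]
        simp [List.getLast_eq_getElem]
    have := waitTime_le_of_occ hocc
    calc waitTime w ξ ≤ ((k + 1 : ℕ) : ℝ≥0∞) := this
      _ = (k : ℝ≥0∞) + 1 := by push_cast; ring
  · rw [waitTime_eq_iInf]
    refine le_iInf fun m => ?_
    split_ifs with hm
    · have := le_of_occ hw hk hm
      calc ((k : ℝ≥0∞) + 1) = ((k + 1 : ℕ) : ℝ≥0∞) := by push_cast; ring
        _ ≤ m := by exact_mod_cast this
    · exact le_top

theorem prepend_shift_eq {w : List (Fin r)} (hw : w ≠ []) {ξ : ℕ → Fin r} {k : ℕ}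
    (hk : waitTime w.dropLast ξ = (k : ℝ≥0∞)) :
    prepend (w.dropLast ++ [ξ k]) (shift (k + 1) ξ) = fun m => ξ (k + 1 - w.length + m) := by
  have hn : 1 ≤ w.length := List.length_pos_iff.2 hw
  have hlen : w.dropLast.length = w.length - 1 := List.length_dropLast
  have hk' : w.length - 1 ≤ k := by have := waitTime_nplus hk; omega
  have hoccu := (occ_of_waitTime_eq hk).1
  have hlen2 : (w.dropLast ++ [ξ k]).length = w.length := by
    simp only [List.length_append, List.length_singleton, hlen]; omega
  funext m
  show prepend _ _ m = _
  unfold prepend shift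
  by_cases h : m < (w.dropLast ++ [ξ k]).length
  · rw [dif_pos h]
    have h' : m < w.length := by omega
    by_cases h2 : m < w.length - 1
    · have e : (w.dropLast ++ [ξ k]).get ⟨m, h⟩ = w.dropLast.get ⟨m, by omega⟩ := by
        simp only [List.get_eq_getElem]
        exact List.getElem_append_left (by omega)
      rw [e]
      have e2 : k + 1 - w.length + m = k - w.dropLast.length + m := by omega
      rw [e2, hoccu.2 m (by omega)]
    · have hm2 : m = w.length - 1 := by omega
      have e : (w.dropLast ++ [ξ k]).get ⟨m, h⟩ = ξ k := by
        simp only [List.get_eq_getElem]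
        rw [List.getElem_append_right (by omega)]
        simp [hlen, hm2]
      rw [e]
      congr 1
      omega
  · rw [dif_neg h]
    have h' : ¬ m < w.length := by omega
    show ξ (k + 1 + (m - (w.dropLast ++ [ξ k]).length)) = _
    congr 1
    omega

theorem V2 {w : List (Fin r)} (hw : w ≠ []) {ξ : ℕ → Fin r} {k : ℕ}
    (hk : waitTime w.dropLast ξ = (k : ℝ≥0∞)) (ha : ξ k ≠ w.getLast hw) :
    waitTime w ξ
      = waitTime w (fun m => ξ (k + 1 - w.length + m)) + ((k + 1 - w.length : ℕ) : ℝ≥0∞) := by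
  have hn : 1 ≤ w.length := List.length_pos_iff.2 hw
  have hlen : w.dropLast.length = w.length - 1 := List.length_dropLast
  have hk' : w.length - 1 ≤ k := by have := waitTime_nplus hk; omega
  set c := k + 1 - w.length with hc
  set ξ' := fun m => ξ (c + m) with hξ'
  have hA : ∀ t, occ w ξ' t → occ w ξ (t + c) := by
    intro t ht
    have ht1 := ht.1
    refine ⟨by omega, fun j hj => ?_⟩
    have := ht.2 j hj
    rw [← this]
    show ξ _ = ξ (c + (t - w.length + j))
    congr 1
    omega
  have hB : ∀ m, occ w ξ m → k + 1 ≤ m ∧ occ w ξ' (m - c) := by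
    intro m hm
    have h1 : k + 1 ≤ m := le_of_occ hw hk hm
    have hm1 := hm.1
    refine ⟨h1, ⟨by omega, fun j hj => ?_⟩⟩
    show ξ (c + (m - c - w.length + j)) = _
    rw [← hm.2 j hj]
    congr 1
    omega
  apply le_antisymm
  · rcases eq_or_ne (waitTime w ξ') ⊤ with h | h
    · rw [h, top_add]; exact le_top
    · obtain ⟨t, ht⟩ := exists_waitTime_eq h
      rw [ht]
      have := waitTime_le_of_occ (hA t (occ_of_waitTime_eq ht).1)
      calc waitTime w ξ ≤ ((t + c : ℕ) : ℝ≥0∞) := this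
        _ = (t : ℝ≥0∞) + (c : ℝ≥0∞) := by push_cast; ring
  · rcases eq_or_ne (waitTime w ξ) ⊤ with h | h
    · have h' : waitTime w ξ' = ⊤ := by
        by_contra hc'
        obtain ⟨t, ht⟩ := exists_waitTime_eq hc'
        have := waitTime_le_of_occ (hA t (occ_of_waitTime_eq ht).1)
        rw [h] at this
        exact absurd this (by simp)
      rw [h, h', top_add]
    · obtain ⟨m, hm⟩ := exists_waitTime_eq h
      obtain ⟨h1, h2⟩ := hB m (occ_of_waitTime_eq hm).1
      have hle := waitTime_le_of_occ h2
      rw [hm]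
      calc waitTime w ξ' + (c : ℝ≥0∞) ≤ ((m - c : ℕ) : ℝ≥0∞) + (c : ℝ≥0∞) :=
            add_le_add hle le_rfl
        _ = ((m - c + c : ℕ) : ℝ≥0∞) := by push_cast; ring
        _ = (m : ℝ≥0∞) := by congr 1; omega


theorem waitTime_nil_eq (ξ : ℕ → Fin r) : waitTime ([] : List (Fin r)) ξ = 0 := by
  have hocc : occ ([] : List (Fin r)) ξ 0 := ⟨le_rfl, fun j hj => absurd hj (by simp)⟩
  apply le_antisymm
  · exact_mod_cast waitTime_le_of_occ hocc
  · exact (by simp)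

theorem waitTime_finite_as [NeZero r] (μ : Measure (ℕ → Fin r)) [IsProbabilityMeasure μ]
    (p : Fin r → ℝ≥0∞) (hpos : ∀ x, 0 < p x)
    (hiid : ∀ (m : ℕ) (f : ℕ → Fin r),
      μ {ξ | ∀ i < m, ξ i = f i} = ∏ i ∈ Finset.range m, p (f i))
    (u : List (Fin r)) : μ {ξ | waitTime u ξ = ⊤} = 0 := by
  rcases eq_or_ne u [] with rfl | hu
  · convert measure_empty (μ := μ)
    ext ξ
    simp [waitTime_nil_eq]
  have hn : 1 ≤ u.length := List.length_pos_iff.2 hu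
  set n := u.length with hnn
  set fu : ℕ → Fin r := fun i => u.getD i default with hfu
  set B₀ : Set (ℕ → Fin r) := cyl n fu with hB₀
  set q : ℝ≥0∞ := μ B₀ with hq
  have hq1 : q ≤ 1 := prob_le_one
  have hq0 : q ≠ 0 := by
    rw [hq, hB₀, mu_cyl μ p hiid]
    rw [Finset.prod_ne_zero_iff]
    exact fun i _ => (hpos (fu i)).ne'
  -- D N
  set D : ℕ → Set (ℕ → Fin r) :=
    fun N => {ξ | ∀ j < N, ¬ ∀ i < n, ξ (j * n + i) = fu i} with hD
  have hDdet : ∀ N, DetBy (D N) (N * n) := by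
    intro N ξ η hag hξ j hj hcon
    refine hξ j hj fun i hi => ?_
    rw [hag (j * n + i) (by nlinarith [hi, hj]), hcon i hi]
  have hstep : ∀ N, D (N + 1) = D N ∩ shift (N * n) ⁻¹' B₀ᶜ := by
    intro N
    ext ξ
    simp only [hD, Set.mem_setOf_eq, Set.mem_inter_iff, Set.mem_preimage, Set.mem_compl_iff]
    constructor
    · intro h
      refine ⟨fun j hj => h j (by omega), fun hc => h N (by omega) fun i hi => hc i hi⟩
    · rintro ⟨h1, h2⟩ j hj
      rcases Nat.lt_succ_iff_lt_or_eq.1 hj with h | rfl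
      · exact h1 j h
      · exact fun hc => h2 fun i hi => hc i hi
  have hmuD : ∀ N, μ (D N) = (1 - q) ^ N := by
    intro N
    induction N with
    | zero => simp [hD]
    | succ N ih =>
      rw [hstep N, indep_detBy μ p hiid (hDdet N) (measurableSet_cyl n fu).compl, ih,
        prob_compl_eq_one_sub (measurableSet_cyl n fu)]
      ring
  have hsub : ∀ N, {ξ : ℕ → Fin r | waitTime u ξ = ⊤} ⊆ D N := by
    intro N ξ hξ j hj hcon
    have hocc : occ u ξ (j * n + n) := by
      refine ⟨by omega, fun i hi => ?_⟩
      have e : j * n + n - u.length + i = j * n + i := by omega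
      rw [e, hcon i hi]
      simp only [hfu, List.getD_eq_getElem?_getD]
      rw [List.getElem?_eq_getElem hi]
      rfl
    have := waitTime_le_of_occ hocc
    have hT : waitTime u ξ = ⊤ := hξ
    rw [hT] at this
    exact ENNReal.natCast_ne_top _ (top_le_iff.1 this)
  have hlim : Filter.Tendsto (fun N => (1 - q) ^ N) Filter.atTop (nhds 0) :=
    ENNReal.tendsto_pow_atTop_nhds_zero_of_lt_one
      (by
        apply ENNReal.sub_lt_self one_ne_top one_ne_zero hq0)
  have hle : ∀ N, μ {ξ : ℕ → Fin r | waitTime u ξ = ⊤} ≤ (1 - q) ^ N := by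
    intro N
    calc μ _ ≤ μ (D N) := measure_mono (hsub N)
      _ = (1 - q) ^ N := hmuD N
  have := ge_of_tendsto' hlim hle
  exact le_antisymm this (by simp)


end Aux
theorem statement_5 {r : ℕ} (hr : 2 ≤ r) (p : Fin r → ℝ≥0∞)
    (hp1 : ∑ x, p x = 1) (hpos : ∀ x, 0 < p x)
    (μ : Measure (ℕ → Fin r)) [IsProbabilityMeasure μ]
    (hiid : ∀ (m : ℕ) (f : ℕ → Fin r),
      μ {ξ | ∀ i < m, ξ i = f i} = ∏ i ∈ Finset.range m, p (f i))
    (w : List (Fin r)) (hw : w ≠ []) :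
    Ew μ w = Ew μ w.dropLast + 1 +
      ∑ y ∈ Finset.univ.filter (fun y => y ≠ w.getLast hw),
        p y * condEw μ w (w.dropLast ++ [y]) := by
  haveI : NeZero r := ⟨by omega⟩
  classical
  have hn : 1 ≤ w.length := List.length_pos_iff.2 hw
  have hlen : w.dropLast.length = w.length - 1 := List.length_dropLast
  set A : ℕ → Set (ℕ → Fin r) := fun k => {ξ | waitTime w.dropLast ξ = (k : ℝ≥0∞)} with hA
  set C : ℕ × Fin r → Set (ℕ → Fin r) := fun ky => A ky.1 ∩ {ξ | ξ ky.1 = ky.2} with hC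
  have hCdet : ∀ ky : ℕ × Fin r, Aux.DetBy (C ky) (ky.1 + 1) := by
    rintro ⟨k, y⟩ ξ η hag ⟨h1, h2⟩
    refine ⟨Aux.detBy_waitTime_eq w.dropLast k ξ η (fun i hi => hag i (by omega)) h1, ?_⟩
    show η k = y
    rw [← hag k (by omega)]; exact h2
  have hCmeas : ∀ ky, MeasurableSet (C ky) := fun ky => Aux.measurableSet_of_detBy (hCdet ky)
  have hCdisj : Pairwise (Function.onFun Disjoint C) := by
    rintro ⟨k, y⟩ ⟨k', y'⟩ hne
    rw [Function.onFun, Set.disjoint_left]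
    rintro ξ ⟨h1, h2⟩ ⟨h1', h2'⟩
    have hk : k = k' := by
      have e1 : waitTime w.dropLast ξ = (k : ℝ≥0∞) := h1
      have e2 : waitTime w.dropLast ξ = (k' : ℝ≥0∞) := h1'
      rw [e1] at e2; exact_mod_cast e2
    subst hk
    have hyy : y = y' := by
      have e1 : ξ k = y := h2
      have e2 : ξ k = y' := h2'
      rw [e1] at e2; exact e2
    exact hne (by rw [hyy])
  have hcompl : (⋃ ky, C ky)ᶜ ⊆ {ξ | waitTime w.dropLast ξ = ⊤} := by
    intro ξ hξ
    by_contra hT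
    obtain ⟨k, hk⟩ := Aux.exists_waitTime_eq hT
    exact hξ (Set.mem_iUnion.2 ⟨(k, ξ k), ⟨hk, rfl⟩⟩)
  have h0 : μ (⋃ ky, C ky)ᶜ = 0 :=
    measure_mono_null hcompl (Aux.waitTime_finite_as μ p hpos hiid w.dropLast)
  have hUmeas : MeasurableSet (⋃ ky, C ky) := MeasurableSet.iUnion hCmeas
  have hsplit : ∀ T : (ℕ → Fin r) → ℝ≥0∞,
      ∫⁻ ξ, T ξ ∂μ = ∑' ky : ℕ × Fin r, ∫⁻ ξ in C ky, T ξ ∂μ := by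
    intro T
    rw [← lintegral_add_compl T hUmeas,
      Measure.restrict_eq_zero.2 h0, lintegral_zero_measure, add_zero,
      Measure.restrict_iUnion hCdisj hCmeas, lintegral_sum_measure]
  have hμC : ∀ ky : ℕ × Fin r, μ (C ky) = μ (A ky.1) * p ky.2 := by
    rintro ⟨k, y⟩
    have hset : C (k, y) = A k ∩ Aux.shift k ⁻¹' (Aux.cyl 1 (fun _ => y)) := by
      ext ξ
      simp only [hC, hA, Set.mem_inter_iff, Set.mem_setOf_eq, Set.mem_preimage, Aux.cyl,
        Aux.shift]
      constructor
      · rintro ⟨h1, h2⟩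
        refine ⟨h1, fun i hi => ?_⟩
        have hi0 : i = 0 := by omega
        subst hi0
        exact h2
      · rintro ⟨h1, h2⟩
        exact ⟨h1, h2 0 one_pos⟩
    rw [hset, Aux.indep_detBy μ p hiid (Aux.detBy_waitTime_eq w.dropLast k)
      (Aux.measurableSet_cyl _ _), Aux.mu_cyl μ p hiid]
    simp [hA]
  have hμU : μ (⋃ ky, C ky) = 1 := by
    apply le_antisymm prob_le_one
    have h1 : (1 : ℝ≥0∞) = μ Set.univ := (measure_univ (μ := μ)).symm
    rw [h1, ← Set.union_compl_self (⋃ ky, C ky)]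
    calc μ _ ≤ μ (⋃ ky, C ky) + μ (⋃ ky, C ky)ᶜ := measure_union_le _ _
      _ = μ (⋃ ky, C ky) := by rw [h0, add_zero]
  have htsumC : ∑' ky : ℕ × Fin r, μ (C ky) = 1 := by
    rw [← measure_iUnion hCdisj hCmeas, hμU]
  have hprod : ∀ F : ℕ × Fin r → ℝ≥0∞,
      ∑' ky : ℕ × Fin r, F ky = ∑' k : ℕ, ∑' y : Fin r, F (k, y) := fun F =>
    (tsum_congr fun ky => (congrArg F (Prod.mk.eta)).symm).trans
      (ENNReal.tsum_prod (f := fun k y => F (k, y)))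
  have htsumA : ∑' k : ℕ, μ (A k) = 1 := by
    rw [← htsumC, hprod (fun ky => μ (C ky))]
    refine tsum_congr fun k => ?_
    rw [tsum_fintype]
    calc μ (A k) = μ (A k) * 1 := (mul_one _).symm
      _ = μ (A k) * ∑ y, p y := by rw [hp1]
      _ = ∑ y, μ (A k) * p y := Finset.mul_sum _ _ _
      _ = ∑ y, μ (C (k, y)) := Finset.sum_congr rfl fun y _ => (hμC (k, y)).symm
  set Dfun : Fin r → ℝ≥0∞ :=
    fun y => if y = w.getLast hw then 0 else condEw μ w (w.dropLast ++ [y]) with hDfun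
  have hterm : ∀ ky : ℕ × Fin r, ∫⁻ ξ in C ky, waitTime w ξ ∂μ
      = μ (C ky) * (((ky.1 : ℝ≥0∞) + 1) + Dfun ky.2) := by
    rintro ⟨k, y⟩
    by_cases hy : y = w.getLast hw
    · subst hy
      have hval : ∀ ξ ∈ C (k, w.getLast hw), waitTime w ξ = (k : ℝ≥0∞) + 1 := by
        rintro ξ ⟨h1, h2⟩
        exact Aux.V1 hw h1 h2
      rw [setLIntegral_congr_fun (hCmeas _) hval, setLIntegral_const]
      have hD0 : Dfun (w.getLast hw) = 0 := by simp [hDfun]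
      rw [hD0, add_zero, mul_comm]
    · rcases Set.eq_empty_or_nonempty (C (k, y)) with he | hne
      · rw [he]; simp
      · obtain ⟨ξ₀, hξ₀⟩ := hne
        have hkn : w.length - 1 ≤ k := by
          have := Aux.waitTime_nplus hξ₀.1
          omega
        set g : (ℕ → Fin r) → ℝ≥0∞ := fun η => waitTime w (prepend (w.dropLast ++ [y]) η)
          with hg
        have hgm : Measurable g := (Aux.measurable_waitTime w).comp (Aux.measurable_prepend _)
        have hval : ∀ ξ ∈ C (k, y),
            waitTime w ξ = g (Aux.shift (k + 1) ξ) + ((k + 1 - w.length : ℕ) : ℝ≥0∞) := by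
          rintro ξ ⟨h1, h2⟩
          have hne' : ξ k ≠ w.getLast hw := by
            have e1 : ξ k = y := h2
            rw [e1]; exact hy
          rw [Aux.V2 hw h1 hne']
          congr 1
          have hps := Aux.prepend_shift_eq hw h1
          have e1 : ξ k = y := h2
          rw [e1] at hps
          rw [← hps]
        rw [setLIntegral_congr_fun (hCmeas _) hval,
          lintegral_add_right _ measurable_const, setLIntegral_const]
        have hmap : Measure.map (Aux.shift (k + 1)) (μ.restrict (C (k, y)))
            = μ (C (k, y)) • μ := by
          ext B hB
          rw [Measure.map_apply (Aux.measurable_shift _) hB,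
            Measure.restrict_apply (Aux.measurable_shift _ hB), Set.inter_comm,
            Aux.indep_detBy μ p hiid (hCdet (k, y)) hB, Measure.smul_apply, smul_eq_mul]
        have hfirst : ∫⁻ ξ in C (k, y), g (Aux.shift (k + 1) ξ) ∂μ
            = μ (C (k, y)) * ∫⁻ η, g η ∂μ := by
          rw [← lintegral_map hgm (Aux.measurable_shift _), hmap, lintegral_smul_measure, smul_eq_mul]
        rw [hfirst]
        have hG : ∫⁻ η, g η ∂μ = (w.length : ℝ≥0∞) + condEw μ w (w.dropLast ++ [y]) := by
          have hle : (w.length : ℝ≥0∞) ≤ ∫⁻ η, g η ∂μ := by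
            calc (w.length : ℝ≥0∞) = ∫⁻ _, (w.length : ℝ≥0∞) ∂μ := by
                  rw [lintegral_const, measure_univ, mul_one]
              _ ≤ ∫⁻ η, g η ∂μ := lintegral_mono fun η => Aux.le_waitTime w _
          rw [condEw]
          have hl : (((w.dropLast ++ [y]).length : ℕ) : ℝ≥0∞) = (w.length : ℝ≥0∞) := by
            have e : (w.dropLast ++ [y]).length = w.length := by
              simp only [List.length_append, List.length_singleton, hlen]
              omega
            rw [e]
          rw [hl]
          exact (add_tsub_cancel_of_le hle).symm
        rw [hG]
        have hD : Dfun y = condEw μ w (w.dropLast ++ [y]) := by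
          rw [hDfun]; simp [hy]
        rw [hD]
        have hcast : (w.length : ℝ≥0∞) + ((k + 1 - w.length : ℕ) : ℝ≥0∞)
            = (k : ℝ≥0∞) + 1 := by
          rw [← Nat.cast_add, show w.length + (k + 1 - w.length) = k + 1 by omega]
          push_cast; ring
        calc μ (C (k, y)) * ((w.length : ℝ≥0∞) + condEw μ w (w.dropLast ++ [y]))
              + ((k + 1 - w.length : ℕ) : ℝ≥0∞) * μ (C (k, y))
            = μ (C (k, y)) * (((w.length : ℝ≥0∞) + ((k + 1 - w.length : ℕ) : ℝ≥0∞))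
              + condEw μ w (w.dropLast ++ [y])) := by ring
          _ = μ (C (k, y)) * (((k : ℝ≥0∞) + 1) + condEw μ w (w.dropLast ++ [y])) := by
              rw [hcast]
  have hEwu : Ew μ w.dropLast = ∑' ky : ℕ × Fin r, μ (C ky) * (ky.1 : ℝ≥0∞) := by
    rw [Ew, hsplit (waitTime w.dropLast)]
    refine tsum_congr fun ky => ?_
    have hval : ∀ ξ ∈ C ky, waitTime w.dropLast ξ = (ky.1 : ℝ≥0∞) := fun ξ hξ => hξ.1
    rw [setLIntegral_congr_fun (hCmeas _) hval, setLIntegral_const, mul_comm]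
  have hK : ∑' ky : ℕ × Fin r, μ (C ky) * Dfun ky.2 = ∑ y, p y * Dfun y := by
    calc ∑' ky : ℕ × Fin r, μ (C ky) * Dfun ky.2
        = ∑' k : ℕ, ∑ y : Fin r, μ (A k) * (p y * Dfun y) := by
          rw [hprod (fun ky => μ (C ky) * Dfun ky.2)]
          exact tsum_congr fun k => by
            rw [tsum_fintype]
            exact Finset.sum_congr rfl fun y _ => by rw [hμC (k, y), mul_assoc]
      _ = ∑' k : ℕ, μ (A k) * ∑ y, p y * Dfun y :=
          tsum_congr fun k => (Finset.mul_sum _ _ _).symm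
      _ = (∑' k : ℕ, μ (A k)) * ∑ y, p y * Dfun y := ENNReal.tsum_mul_right
      _ = ∑ y, p y * Dfun y := by rw [htsumA, one_mul]
  have hKfilter : ∑ y, p y * Dfun y
      = ∑ y ∈ Finset.univ.filter (fun y => y ≠ w.getLast hw),
          p y * condEw μ w (w.dropLast ++ [y]) := by
    rw [← Finset.sum_filter_add_sum_filter_not Finset.univ (fun y => y ≠ w.getLast hw)
      (fun y => p y * Dfun y)]
    have h2 : ∑ y ∈ Finset.univ.filter (fun y => ¬ y ≠ w.getLast hw), p y * Dfun y = 0 := by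
      refine Finset.sum_eq_zero fun y hy => ?_
      simp only [Finset.mem_filter, not_not] at hy
      rw [hDfun]
      simp [hy.2]
    rw [h2, add_zero]
    refine Finset.sum_congr rfl fun y hy => ?_
    simp only [Finset.mem_filter] at hy
    rw [hDfun]
    simp [hy.2]
  rw [← hKfilter, ← hK]
  rw [show Ew μ w = ∑' ky : ℕ × Fin r, ∫⁻ ξ in C ky, waitTime w ξ ∂μ from hsplit (waitTime w)]
  rw [tsum_congr hterm]
  calc ∑' ky : ℕ × Fin r, μ (C ky) * (((ky.1 : ℝ≥0∞) + 1) + Dfun ky.2)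
      = ∑' ky : ℕ × Fin r, ((μ (C ky) * (ky.1 : ℝ≥0∞) + μ (C ky)) + μ (C ky) * Dfun ky.2) := by
        refine tsum_congr fun ky => ?_
        ring
    _ = (∑' ky : ℕ × Fin r, (μ (C ky) * (ky.1 : ℝ≥0∞) + μ (C ky)))
        + ∑' ky : ℕ × Fin r, μ (C ky) * Dfun ky.2 := ENNReal.tsum_add
    _ = ((∑' ky : ℕ × Fin r, μ (C ky) * (ky.1 : ℝ≥0∞)) + ∑' ky : ℕ × Fin r, μ (C ky))
        + ∑' ky : ℕ × Fin r, μ (C ky) * Dfun ky.2 := by rw [ENNReal.tsum_add]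
    _ = Ew μ w.dropLast + 1 + ∑' ky : ℕ × Fin r, μ (C ky) * Dfun ky.2 := by
        rw [← hEwu, htsumC]
end

section
/- Let w be a finite word of length n ≥ 1. For x ∈ X let w_x = w[1,n−1]x and let ŵ_x be the longest bifix of w_x. Then for every x ∈ X: p(x)E(w_x) = E(w[1,n−1]) + 1 − Σ_{y ≠ x} p(y)E(ŵ_y). -/
open MeasureTheory ENNReal

namespace S6
variable {r : ℕ}

def seg (ξ : ℕ → Fin r) (i l : ℕ) : List (Fin r) := List.ofFn (fun j : Fin l => ξ (i + j.1))

@[simp] lemma seg_zero (ξ : ℕ → Fin r) (i : ℕ) : seg ξ i 0 = [] := rfl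

@[simp] lemma seg_length (ξ : ℕ → Fin r) (i l : ℕ) : (seg ξ i l).length = l := by
  simp [seg]

@[simp] lemma seg_getElem (ξ : ℕ → Fin r) (i l j : ℕ) (h : j < (seg ξ i l).length) :
    (seg ξ i l)[j] = ξ (i + j) := by
  simp only [seg_length] at h
  simp [seg, List.getElem_ofFn]

lemma seg_succ (ξ : ℕ → Fin r) (i l : ℕ) : seg ξ i (l+1) = seg ξ i l ++ [ξ (i + l)] := by
  apply List.ext_getElem (by simp)
  intro j h1 h2
  simp only [seg_length] at h1
  rcases Nat.lt_or_ge j l with h | h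
  · rw [seg_getElem, List.getElem_append_left (by simpa using h), seg_getElem]
  · have hj : j = l := by omega
    subst hj
    rw [seg_getElem, List.getElem_append_right (by simp)]
    simp

lemma seg_congr {ξ ξ' : ℕ → Fin r} (i l : ℕ) (h : ∀ n < i + l, ξ n = ξ' n) :
    seg ξ i l = seg ξ' i l := by
  unfold seg; congr 1; funext j; exact h _ (by omega)

lemma seg_drop (ξ : ℕ → Fin r) (i l d : ℕ) (hd : d ≤ l) :
    (seg ξ i l).drop d = seg ξ (i + d) (l - d) := by
  apply List.ext_getElem (by simp)
  intro j h1 h2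
  rw [List.getElem_drop, seg_getElem, seg_getElem]
  congr 1; omega

lemma seg_eq_self_iff (ξ : ℕ → Fin r) (i : ℕ) (u : List (Fin r)) :
    seg ξ i u.length = u ↔ ∀ j : ℕ, (hj : j < u.length) → ξ (i + j) = u.get ⟨j, hj⟩ := by
  constructor
  · intro h j hj
    have h2 := seg_getElem ξ i u.length j (by simpa using hj)
    rw [List.get_eq_getElem, ← h2]
    exact List.getElem_of_eq h _
  · intro h
    apply List.ext_getElem (by simp)
    intro j h1 h2
    rw [seg_getElem]
    simpa using h j h2

def Hit (u : List (Fin r)) (ξ : ℕ → Fin r) (k : ℕ) : Prop :=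
  u.length ≤ k ∧ seg ξ (k - u.length) u.length = u

open Classical in
noncomputable def stopT (u : List (Fin r)) (ξ : ℕ → Fin r) (k : ℕ) : ℕ :=
  if ∃ j, j ≤ k ∧ Hit u ξ j then sInf {j | Hit u ξ j} else k

noncomputable def wealth (p : Fin r → ℝ≥0∞) (u : List (Fin r)) (ξ : ℕ → Fin r) (k : ℕ) : ℝ≥0∞ :=
  ∑ j ∈ Finset.range (min k u.length),
    if seg ξ (k - (j+1)) (j+1) = u.take (j+1) then (pword p (u.take (j+1)))⁻¹ else 0

noncomputable def Cw (p : Fin r → ℝ≥0∞) (u : List (Fin r)) : ℝ≥0∞ :=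
  ∑ j ∈ Finset.range u.length,
    if u.take (j+1) <:+ u then (pword p (u.take (j+1)))⁻¹ else 0

lemma Hit_congr {u : List (Fin r)} {ξ ξ' : ℕ → Fin r} {k j : ℕ}
    (h : ∀ i < k, ξ i = ξ' i) (hj : j ≤ k) : Hit u ξ j ↔ Hit u ξ' j := by
  unfold Hit
  by_cases hn : u.length ≤ j
  · have : seg ξ (j - u.length) u.length = seg ξ' (j - u.length) u.length :=
      seg_congr _ _ (fun n hn' => h n (by omega))
    rw [this]
  · simp [hn]

lemma stopT_le (u : List (Fin r)) (ξ : ℕ → Fin r) (k : ℕ) : stopT u ξ k ≤ k := by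
  unfold stopT
  split
  · next h => obtain ⟨j, hj, hhit⟩ := h; exact le_trans (Nat.sInf_le hhit) hj
  · exact le_refl k

lemma stopT_of_ex {u : List (Fin r)} {ξ : ℕ → Fin r} {k : ℕ} (h : ∃ j, j ≤ k ∧ Hit u ξ j) :
    stopT u ξ k = sInf {j | Hit u ξ j} := if_pos h

lemma stopT_of_not_ex {u : List (Fin r)} {ξ : ℕ → Fin r} {k : ℕ} (h : ¬ ∃ j, j ≤ k ∧ Hit u ξ j) :
    stopT u ξ k = k := if_neg h

lemma stopT_congr {u : List (Fin r)} {ξ ξ' : ℕ → Fin r} {k : ℕ}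
    (h : ∀ i < k, ξ i = ξ' i) : stopT u ξ k = stopT u ξ' k := by
  by_cases hex : ∃ j, j ≤ k ∧ Hit u ξ j
  · have hex' : ∃ j, j ≤ k ∧ Hit u ξ' j := by
      obtain ⟨j, hj, hh⟩ := hex; exact ⟨j, hj, (Hit_congr h hj).mp hh⟩
    rw [stopT_of_ex hex, stopT_of_ex hex']
    apply le_antisymm
    · apply Nat.sInf_le
      have h1 : sInf {j | Hit u ξ' j} ≤ k := by
        obtain ⟨j, hj, hh⟩ := hex'; exact le_trans (Nat.sInf_le hh) hj
      have h2 : Hit u ξ' (sInf {j | Hit u ξ' j}) := Nat.sInf_mem (s := {j | Hit u ξ' j}) ⟨_, hex'.choose_spec.2⟩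
      exact (Hit_congr h h1).mpr h2
    · apply Nat.sInf_le
      have h1 : sInf {j | Hit u ξ j} ≤ k := by
        obtain ⟨j, hj, hh⟩ := hex; exact le_trans (Nat.sInf_le hh) hj
      have h2 : Hit u ξ (sInf {j | Hit u ξ j}) := Nat.sInf_mem (s := {j | Hit u ξ j}) ⟨_, hex.choose_spec.2⟩
      exact (Hit_congr h h1).mp h2
  · have hex' : ¬ ∃ j, j ≤ k ∧ Hit u ξ' j := by
      intro ⟨j, hj, hh⟩; exact hex ⟨j, hj, (Hit_congr h hj).mpr hh⟩
    rw [stopT_of_not_ex hex, stopT_of_not_ex hex']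

lemma stopT_mono (u : List (Fin r)) (ξ : ℕ → Fin r) {k k' : ℕ} (h : k ≤ k') :
    stopT u ξ k ≤ stopT u ξ k' := by
  by_cases hex : ∃ j, j ≤ k ∧ Hit u ξ j
  · have hex' : ∃ j, j ≤ k' ∧ Hit u ξ j := by
      obtain ⟨j, hj, hh⟩ := hex; exact ⟨j, le_trans hj h, hh⟩
    rw [stopT_of_ex hex, stopT_of_ex hex']
  · rw [stopT_of_not_ex hex]
    by_cases hex' : ∃ j, j ≤ k' ∧ Hit u ξ j
    · rw [stopT_of_ex hex']
      by_contra hc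
      push_neg at hc
      have h2 : Hit u ξ (sInf {j | Hit u ξ j}) := Nat.sInf_mem (s := {j | Hit u ξ j}) ⟨_, hex'.choose_spec.2⟩
      exact hex ⟨_, le_of_lt hc, h2⟩
    · rw [stopT_of_not_ex hex']; exact h

lemma waitTime_eq_iSup (u : List (Fin r)) (ξ : ℕ → Fin r) :
    waitTime u ξ = ⨆ k, (stopT u ξ k : ℝ≥0∞) := by
  have hset : {t : ℝ≥0∞ | ∃ k : ℕ, t = k ∧ u.length ≤ k ∧
      ∀ j : ℕ, (hj : j < u.length) → ξ (k - u.length + j) = u.get ⟨j, hj⟩}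
      = (fun k : ℕ => (k : ℝ≥0∞)) '' {k | Hit u ξ k} := by
    ext t
    simp only [Set.mem_setOf_eq, Set.mem_image, Hit]
    constructor
    · rintro ⟨k, rfl, h1, h2⟩
      exact ⟨k, ⟨h1, (seg_eq_self_iff _ _ _).mpr h2⟩, rfl⟩
    · rintro ⟨k, ⟨h1, h2⟩, rfl⟩
      exact ⟨k, rfl, h1, (seg_eq_self_iff _ _ _).mp h2⟩
  unfold waitTime
  rw [hset]
  by_cases hne : {k | Hit u ξ k}.Nonempty
  · set t := sInf {k | Hit u ξ k} with ht
    have hmem : Hit u ξ t := Nat.sInf_mem hne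
    have h1 : sInf ((fun k : ℕ => (k : ℝ≥0∞)) '' {k | Hit u ξ k}) = (t : ℝ≥0∞) := by
      apply le_antisymm
      · exact sInf_le ⟨t, hmem, rfl⟩
      · apply le_sInf
        rintro b ⟨k, hk, rfl⟩
        show (t : ℝ≥0∞) ≤ (k : ℝ≥0∞)
        exact_mod_cast Nat.sInf_le hk
    rw [h1]
    apply le_antisymm
    · have : stopT u ξ t = t := by
        rw [stopT_of_ex ⟨t, le_refl t, hmem⟩]
      exact le_iSup_of_le t (by rw [this])
    · apply iSup_le
      intro k
      have : stopT u ξ k ≤ t := by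
        by_cases hex : ∃ j, j ≤ k ∧ Hit u ξ j
        · rw [stopT_of_ex hex]
        · rw [stopT_of_not_ex hex]
          by_contra hc
          push_neg at hc
          exact hex ⟨t, le_of_lt hc, hmem⟩
      exact_mod_cast this
  · have : (fun k : ℕ => (k : ℝ≥0∞)) '' {k | Hit u ξ k} = ∅ := by
      rw [Set.not_nonempty_iff_eq_empty] at hne
      rw [hne, Set.image_empty]
    rw [this, sInf_empty]
    have hstop : ∀ k, stopT u ξ k = k := by
      intro k
      apply stopT_of_not_ex
      rintro ⟨j, _, hh⟩
      exact hne ⟨j, hh⟩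
    simp only [hstop]
    exact (ENNReal.iSup_natCast).symm


@[simp] lemma pword_nil (p : Fin r → ℝ≥0∞) : pword p ([] : List (Fin r)) = 1 := rfl

lemma pword_append (p : Fin r → ℝ≥0∞) (a b : List (Fin r)) :
    pword p (a ++ b) = pword p a * pword p b := by
  unfold pword; rw [List.map_append, List.prod_append]

@[simp] lemma pword_singleton (p : Fin r → ℝ≥0∞) (s : Fin r) : pword p [s] = p s := by
  unfold pword; simp

lemma pword_ne_zero {p : Fin r → ℝ≥0∞} (hpos : ∀ x, 0 < p x) (u : List (Fin r)) :
    pword p u ≠ 0 := by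
  induction u with
  | nil => simp
  | cons a l ih =>
      have : pword p (a :: l) = p a * pword p l := by unfold pword; simp
      rw [this]
      exact mul_ne_zero (hpos a).ne' ih

lemma p_le_one {p : Fin r → ℝ≥0∞} (hp1 : ∑ x, p x = 1) (y : Fin r) : p y ≤ 1 := by
  rw [← hp1]
  exact Finset.single_le_sum (fun i _ => zero_le) (Finset.mem_univ y)

lemma p_ne_top {p : Fin r → ℝ≥0∞} (hp1 : ∑ x, p x = 1) (y : Fin r) : p y ≠ ∞ :=
  ne_top_of_le_ne_top one_ne_top (p_le_one hp1 y)

lemma take_concat {α : Type*} (l : List α) (j : ℕ) (h : j < l.length) :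
    l.take (j+1) = l.take j ++ [l.get ⟨j, h⟩] := by
  have := List.take_concat_get h
  simpa [List.concat_eq_append] using this.symm

lemma concat_inj {α : Type*} {a b : List α} {s t : α} :
    a ++ [s] = b ++ [t] ↔ a = b ∧ s = t := by
  constructor
  · intro h
    have := List.append_inj' h rfl
    simpa using this
  · rintro ⟨rfl, rfl⟩; rfl

lemma wealth_congr {p : Fin r → ℝ≥0∞} {u : List (Fin r)} {ξ ξ' : ℕ → Fin r} {k : ℕ}
    (h : ∀ i < k, ξ i = ξ' i) : wealth p u ξ k = wealth p u ξ' k := by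
  unfold wealth
  apply Finset.sum_congr rfl
  intro j hj
  simp only [Finset.mem_range] at hj
  have hle : j + 1 ≤ k := by omega
  have : seg ξ (k - (j+1)) (j+1) = seg ξ' (k - (j+1)) (j+1) :=
    seg_congr _ _ (fun n hn => h n (by omega))
  rw [this]

noncomputable def Bo (p : Fin r → ℝ≥0∞) (u : List (Fin r)) : ℝ≥0∞ :=
  ∑ j ∈ Finset.range u.length, (pword p (u.take (j+1)))⁻¹

lemma wealth_le_Bo (p : Fin r → ℝ≥0∞) (u : List (Fin r)) (ξ : ℕ → Fin r) (k : ℕ) :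
    wealth p u ξ k ≤ Bo p u := by
  unfold wealth Bo
  calc ∑ j ∈ Finset.range (min k u.length),
      (if seg ξ (k - (j+1)) (j+1) = u.take (j+1) then (pword p (u.take (j+1)))⁻¹ else 0)
      ≤ ∑ j ∈ Finset.range (min k u.length), (pword p (u.take (j+1)))⁻¹ := by
        apply Finset.sum_le_sum
        intro j _
        split <;> simp
    _ ≤ ∑ j ∈ Finset.range u.length, (pword p (u.take (j+1)))⁻¹ := by
        apply Finset.sum_le_sum_of_subset
        apply Finset.range_subset_range.mpr
        omega

lemma Bo_ne_top {p : Fin r → ℝ≥0∞} (hpos : ∀ x, 0 < p x) (u : List (Fin r)) :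
    Bo p u ≠ ∞ := by
  unfold Bo
  rw [← lt_top_iff_ne_top]
  apply ENNReal.sum_lt_top.mpr
  intro j _
  rw [lt_top_iff_ne_top]
  exact ENNReal.inv_ne_top.mpr (pword_ne_zero hpos _)

lemma Cw_le_Bo (p : Fin r → ℝ≥0∞) (u : List (Fin r)) : Cw p u ≤ Bo p u := by
  unfold Cw Bo
  apply Finset.sum_le_sum
  intro j _
  split <;> simp

lemma Cw_ne_top {p : Fin r → ℝ≥0∞} (hpos : ∀ x, 0 < p x) (u : List (Fin r)) :
    Cw p u ≠ ∞ :=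
  ne_top_of_le_ne_top (Bo_ne_top hpos u) (Cw_le_Bo p u)

lemma take_suffix_iff_eq_drop {α : Type*} (u : List α) (l : ℕ) (hl : l ≤ u.length) :
    (u.take l <:+ u) ↔ u.take l = u.drop (u.length - l) := by
  rw [List.suffix_iff_eq_drop, List.length_take, min_eq_left hl]

lemma wealth_at_hit {p : Fin r → ℝ≥0∞} {u : List (Fin r)} {ξ : ℕ → Fin r} {t : ℕ}
    (h : Hit u ξ t) : wealth p u ξ t = Cw p u := by
  obtain ⟨hnt, hseg⟩ := h
  unfold wealth Cw
  rw [min_eq_right hnt]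
  apply Finset.sum_congr rfl
  intro j hj
  simp only [Finset.mem_range] at hj
  have h1 : seg ξ (t - (j+1)) (j+1) = u.drop (u.length - (j+1)) := by
    have := congrArg (List.drop (u.length - (j+1))) hseg
    rw [seg_drop _ _ _ _ (by omega)] at this
    have harith1 : t - u.length + (u.length - (j + 1)) = t - (j+1) := by omega
    have harith2 : u.length - (u.length - (j + 1)) = j + 1 := by omega
    rw [harith1, harith2] at this
    exact this
  rw [h1]
  have hcond : (u.drop (u.length - (j+1)) = u.take (j+1)) ↔ (u.take (j+1) <:+ u) := by
    rw [take_suffix_iff_eq_drop u (j+1) (by omega)]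
    exact eq_comm
  exact if_congr hcond rfl rfl

lemma pstep {p : Fin r → ℝ≥0∞} (hp1 : ∑ x, p x = 1) (hpos : ∀ x, 0 < p x)
    (u : List (Fin r)) {j : ℕ} (hjn : j < u.length) :
    p (u.get ⟨j, hjn⟩) * (pword p (u.take (j+1)))⁻¹ = (pword p (u.take j))⁻¹ := by
  rw [take_concat u j hjn, pword_append, pword_singleton]
  rw [ENNReal.mul_inv (Or.inl (pword_ne_zero hpos _)) (Or.inr (hpos _).ne')]
  rw [show p (u.get ⟨j, hjn⟩) * ((pword p (u.take j))⁻¹ * (p (u.get ⟨j, hjn⟩))⁻¹)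
      = (pword p (u.take j))⁻¹ * (p (u.get ⟨j, hjn⟩) * (p (u.get ⟨j, hjn⟩))⁻¹) by ring]
  rw [ENNReal.mul_inv_cancel (hpos _).ne' (p_ne_top hp1 _), mul_one]

lemma fairness {p : Fin r → ℝ≥0∞} (hp1 : ∑ x, p x = 1) (hpos : ∀ x, 0 < p x)
    {u : List (Fin r)} (hu : u ≠ []) {ξ : ℕ → Fin r} {k : ℕ} (hk : ¬ Hit u ξ k) :
    ∑ y, p y * wealth p u (Function.update ξ k y) (k+1) = wealth p u ξ k + 1 := by
  have hn1 : 1 ≤ u.length := List.length_pos_iff.mpr hu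
  have key : ∀ j < min (k+1) u.length,
      (∑ y, p y * (if seg (Function.update ξ k y) (k+1 - (j+1)) (j+1) = u.take (j+1)
        then (pword p (u.take (j+1)))⁻¹ else 0))
      = (if seg ξ (k-j) j = u.take j then (pword p (u.take j))⁻¹ else 0) := by
    intro j hj
    have hjk : j ≤ k := by omega
    have hjn : j < u.length := by omega
    have e2 : ∀ y : Fin r, seg (Function.update ξ k y) (k+1-(j+1)) (j+1)
        = seg ξ (k-j) j ++ [y] := by
      intro y
      have e1 : k + 1 - (j+1) = k - j := by omega
      rw [e1, seg_succ]
      have e3 : k - j + j = k := by omega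
      rw [e3, Function.update_self]
      congr 1
      apply seg_congr
      intro m hm
      rw [Function.update_of_ne (by omega)]
    have e4 : u.take (j+1) = u.take j ++ [u.get ⟨j, hjn⟩] := take_concat u j hjn
    have hc : ∀ y : Fin r, (seg (Function.update ξ k y) (k+1-(j+1)) (j+1) = u.take (j+1))
        ↔ (seg ξ (k-j) j = u.take j ∧ u.get ⟨j, hjn⟩ = y) := by
      intro y
      rw [e2 y, e4]
      exact concat_inj.trans (and_congr Iff.rfl eq_comm)
    calc (∑ y, p y * (if seg (Function.update ξ k y) (k+1 - (j+1)) (j+1) = u.take (j+1)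
        then (pword p (u.take (j+1)))⁻¹ else 0))
        = ∑ y, (if u.get ⟨j, hjn⟩ = y
            then (p y * (if seg ξ (k-j) j = u.take j then (pword p (u.take (j+1)))⁻¹ else 0))
            else 0) := by
          apply Finset.sum_congr rfl
          intro y _
          by_cases hA : seg ξ (k-j) j = u.take j
          · by_cases hB : u.get ⟨j, hjn⟩ = y
            · rw [if_pos ((hc y).mpr ⟨hA, hB⟩), if_pos hB, if_pos hA]
            · rw [if_neg (fun hcc => hB ((hc y).mp hcc).2), if_neg hB, mul_zero]
          · by_cases hB : u.get ⟨j, hjn⟩ = y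
            · rw [if_neg (fun hcc => hA ((hc y).mp hcc).1), if_pos hB, if_neg hA, mul_zero]
            · rw [if_neg (fun hcc => hB ((hc y).mp hcc).2), if_neg hB, mul_zero]
      _ = p (u.get ⟨j, hjn⟩) *
            (if seg ξ (k-j) j = u.take j then (pword p (u.take (j+1)))⁻¹ else 0) := by
          rw [Finset.sum_ite_eq]
          exact if_pos (Finset.mem_univ _)
      _ = (if seg ξ (k-j) j = u.take j then (pword p (u.take j))⁻¹ else 0) := by
          rw [mul_ite, mul_zero, pstep hp1 hpos u hjn]
  have goal1 : ∑ y, p y * wealth p u (Function.update ξ k y) (k+1)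
      = ∑ j ∈ Finset.range (min (k+1) u.length),
          ∑ y, p y * (if seg (Function.update ξ k y) (k + 1 - (j + 1)) (j + 1) = u.take (j+1)
            then (pword p (u.take (j+1)))⁻¹ else 0) := by
    unfold wealth
    simp_rw [Finset.mul_sum]
    rw [Finset.sum_comm]
  rw [goal1]
  rw [Finset.sum_congr rfl (fun j hj => key j (Finset.mem_range.mp hj))]
  obtain ⟨M', hM'⟩ : ∃ M', min (k+1) u.length = M' + 1 := ⟨min (k+1) u.length - 1, by omega⟩
  rw [hM', Finset.sum_range_succ']
  have h0 : (if seg ξ (k-0) 0 = u.take 0 then (pword p (u.take 0))⁻¹ else 0) = 1 := by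
    simp
  rw [h0]
  congr 1
  unfold wealth
  rcases le_or_gt (k+1) u.length with hcase | hcase
  · have hmk : min k u.length = M' := by omega
    rw [hmk]
  · have hnk : u.length ≤ k := by omega
    have hmk : min k u.length = u.length := by omega
    rw [hmk]
    obtain ⟨n', hn'⟩ : ∃ n', u.length = n' + 1 := ⟨u.length - 1, by omega⟩
    have hM'n : M' = n' := by omega
    rw [hM'n, hn', Finset.sum_range_succ]
    have hzero : (if seg ξ (k-(n'+1)) (n'+1) = u.take (n'+1) then (pword p (u.take (n'+1)))⁻¹ else 0) = 0 := by
      rw [if_neg]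
      intro hcc
      apply hk
      refine ⟨by omega, ?_⟩
      rw [hn']
      rw [← hn'] at hcc ⊢
      rw [List.take_length] at hcc
      exact hn' ▸ hcc
    rw [hzero, add_zero]


section Meas
variable [NeZero r]

def extFin (m : ℕ) (g : Fin m → Fin r) : ℕ → Fin r :=
  fun n => if h : n < m then g ⟨n, h⟩ else 0

def restr (m : ℕ) (ξ : ℕ → Fin r) : Fin m → Fin r := fun i => ξ i.1

def cylSet (m : ℕ) (g : Fin m → Fin r) : Set (ℕ → Fin r) :=
  {ξ | ∀ i : ℕ, (h : i < m) → ξ i = g ⟨i, h⟩}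

def DependsOn {α : Type*} (F : (ℕ → Fin r) → α) (m : ℕ) : Prop :=
  ∀ ξ ξ' : ℕ → Fin r, (∀ i < m, ξ i = ξ' i) → F ξ = F ξ'

lemma DependsOn.mono {α : Type*} {F : (ℕ → Fin r) → α} {m m' : ℕ}
    (h : DependsOn F m) (hm : m ≤ m') : DependsOn F m' :=
  fun ξ ξ' ha => h ξ ξ' (fun i hi => ha i (lt_of_lt_of_le hi hm))

lemma measurableSet_cylSet (m : ℕ) (g : Fin m → Fin r) : MeasurableSet (cylSet m g) := by
  have h : cylSet m g = ⋂ i : Fin m, (fun ξ : ℕ → Fin r => ξ i.1) ⁻¹' {g i} := by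
    ext ξ
    simp only [cylSet, Set.mem_iInter, Set.mem_setOf_eq, Set.mem_preimage, Set.mem_singleton_iff]
    constructor
    · intro h i; exact h i.1 i.2
    · intro h i hi; exact h ⟨i, hi⟩
  rw [h]
  exact MeasurableSet.iInter (fun i => (measurable_pi_apply i.1) (measurableSet_singleton (g i)))

lemma mem_cylSet_restr (m : ℕ) (ξ : ℕ → Fin r) : ξ ∈ cylSet m (restr m ξ) :=
  fun _ _ => rfl

lemma dependsOn_ext {α : Type*} {F : (ℕ → Fin r) → α} {m : ℕ} (hF : DependsOn F m)
    (ξ : ℕ → Fin r) : F ξ = F (extFin m (restr m ξ)) :=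
  hF ξ _ (fun i hi => by simp [extFin, restr, hi])

lemma measurable_dependsOn {β : Type*} [MeasurableSpace β] {F : (ℕ → Fin r) → β} {m : ℕ}
    (hF : DependsOn F m) : Measurable F := by
  have h : F = (fun g : Fin m → Fin r => F (extFin m g)) ∘ (restr m) := by
    funext ξ
    exact dependsOn_ext hF ξ
  rw [h]
  exact (measurable_of_countable _).comp
    (measurable_pi_lambda _ (fun i => measurable_pi_apply i.1))

variable (μ : Measure (ℕ → Fin r)) (p : Fin r → ℝ≥0∞)

lemma measure_cylSet
    (hiid : ∀ (m : ℕ) (f : ℕ → Fin r),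
      μ {ξ | ∀ i < m, ξ i = f i} = ∏ i ∈ Finset.range m, p (f i))
    (m : ℕ) (g : Fin m → Fin r) :
    μ (cylSet m g) = ∏ i : Fin m, p (g i) := by
  have h1 : cylSet m g = {ξ | ∀ i < m, ξ i = extFin m g i} := by
    ext ξ
    constructor
    · intro h i hi; rw [h i hi]; simp [extFin, hi]
    · intro h i hi; rw [h i hi]; simp [extFin, hi]
  rw [h1, hiid m (extFin m g)]
  rw [← Fin.prod_univ_eq_prod_range (fun i => p (extFin m g i)) m]
  apply Finset.prod_congr rfl
  intro i _
  congr 1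
  simp [extFin, i.2]

lemma lintegral_dependsOn
    (hiid : ∀ (m : ℕ) (f : ℕ → Fin r),
      μ {ξ | ∀ i < m, ξ i = f i} = ∏ i ∈ Finset.range m, p (f i))
    (m : ℕ) (F : (ℕ → Fin r) → ℝ≥0∞) (hF : DependsOn F m) :
    ∫⁻ ξ, F ξ ∂μ = ∑ g : Fin m → Fin r, (∏ i, p (g i)) * F (extFin m g) := by
  have hrw : ∀ ξ, F ξ
      = ∑ g : Fin m → Fin r, Set.indicator (cylSet m g) (fun _ => F (extFin m g)) ξ := by
    intro ξ
    rw [Finset.sum_eq_single (restr m ξ)]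
    · rw [Set.indicator_of_mem (mem_cylSet_restr m ξ)]
      exact dependsOn_ext hF ξ
    · intro g _ hg
      rw [Set.indicator_of_notMem]
      intro hmem
      apply hg
      funext i
      exact (hmem i.1 i.2).symm
    · intro h; exact absurd (Finset.mem_univ _) h
  calc ∫⁻ ξ, F ξ ∂μ
      = ∫⁻ ξ, ∑ g : Fin m → Fin r,
          Set.indicator (cylSet m g) (fun _ => F (extFin m g)) ξ ∂μ :=
        lintegral_congr hrw
    _ = ∑ g : Fin m → Fin r,
          ∫⁻ ξ, Set.indicator (cylSet m g) (fun _ => F (extFin m g)) ξ ∂μ :=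
        lintegral_finset_sum _
          (fun g _ => measurable_const.indicator (measurableSet_cylSet m g))
    _ = ∑ g : Fin m → Fin r, (∏ i, p (g i)) * F (extFin m g) := by
        apply Finset.sum_congr rfl
        intro g _
        rw [lintegral_indicator_const (measurableSet_cylSet m g)]
        rw [measure_cylSet μ p hiid m g, mul_comm]

def snocEquiv (k : ℕ) : ((Fin k → Fin r) × Fin r) ≃ (Fin (k+1) → Fin r) where
  toFun q := Fin.snoc q.1 q.2
  invFun g := (fun i => g i.castSucc, g (Fin.last k))
  left_inv q := by
    obtain ⟨g, y⟩ := q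
    refine Prod.ext ?_ ?_
    · funext i; simp
    · simp
  right_inv g := by
    funext i
    refine Fin.lastCases ?_ ?_ i
    · simp
    · intro i; simp

lemma lintegral_step
    (hiid : ∀ (m : ℕ) (f : ℕ → Fin r),
      μ {ξ | ∀ i < m, ξ i = f i} = ∏ i ∈ Finset.range m, p (f i))
    {k : ℕ} (F : (ℕ → Fin r) → ℝ≥0∞) (hF : DependsOn F (k+1)) :
    ∫⁻ ξ, F ξ ∂μ = ∫⁻ ξ, ∑ y, p y * F (Function.update ξ k y) ∂μ := by
  have hG : DependsOn (fun ξ => ∑ y, p y * F (Function.update ξ k y)) k := by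
    intro ξ ξ' h
    apply Finset.sum_congr rfl
    intro y _
    congr 1
    apply hF
    intro i hi
    by_cases hik : i = k
    · subst hik; simp
    · rw [Function.update_of_ne hik, Function.update_of_ne hik]
      exact h i (by omega)
  rw [lintegral_dependsOn μ p hiid (k+1) F hF, lintegral_dependsOn μ p hiid k _ hG]
  rw [← Equiv.sum_comp (snocEquiv (r := r) k)
    (fun g => (∏ i, p (g i)) * F (extFin (k+1) g))]
  rw [Fintype.sum_prod_type]
  apply Finset.sum_congr rfl
  intro g _
  rw [Finset.mul_sum]
  apply Finset.sum_congr rfl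
  intro y _
  have h1 : ∏ i, p ((snocEquiv (r := r) k) (g, y) i) = (∏ i, p (g i)) * p y := by
    simp only [snocEquiv, Equiv.coe_fn_mk]
    rw [Fin.prod_univ_castSucc]
    simp
  have h2 : F (extFin (k+1) ((snocEquiv (r := r) k) (g, y)))
      = F (Function.update (extFin k g) k y) := by
    apply hF
    intro i hi
    by_cases hik : i < k
    · have e1 : extFin (k+1) ((snocEquiv (r := r) k) (g, y)) i = g ⟨i, hik⟩ := by
        simp only [extFin, snocEquiv, Equiv.coe_fn_mk]
        rw [dif_pos (by omega : i < k + 1)]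
        have e : (⟨i, by omega⟩ : Fin (k+1)) = Fin.castSucc ⟨i, hik⟩ := rfl
        rw [e, Fin.snoc_castSucc]
      have e2 : Function.update (extFin k g) k y i = g ⟨i, hik⟩ := by
        rw [Function.update_of_ne (by omega)]
        simp [extFin, hik]
      rw [e1, e2]
    · have hik' : i = k := by omega
      subst hik'
      have e1 : extFin (i+1) ((snocEquiv (r := r) i) (g, y)) i = y := by
        simp only [extFin, snocEquiv, Equiv.coe_fn_mk]
        rw [dif_pos (by omega : i < i + 1)]
        have e : (⟨i, by omega⟩ : Fin (i+1)) = Fin.last i := rfl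
        rw [e, Fin.snoc_last]
      rw [e1, Function.update_self]
  rw [h1, h2]
  ring

end Meas


section Mart
variable [NeZero r] (μ : Measure (ℕ → Fin r)) (p : Fin r → ℝ≥0∞)

lemma dStop (u : List (Fin r)) (m : ℕ) :
    DependsOn (fun ξ => (stopT u ξ m : ℝ≥0∞)) m := by
  intro ξ ξ' h
  show ((stopT u ξ m : ℕ) : ℝ≥0∞) = ((stopT u ξ' m : ℕ) : ℝ≥0∞)
  rw [stopT_congr h]

lemma dW (p : Fin r → ℝ≥0∞) (u : List (Fin r)) (m : ℕ) :
    DependsOn (fun ξ => wealth p u ξ (stopT u ξ m)) m := by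
  intro ξ ξ' h
  show wealth p u ξ (stopT u ξ m) = wealth p u ξ' (stopT u ξ' m)
  have h1 := stopT_congr (u := u) (k := m) h
  rw [← h1]
  exact wealth_congr (fun i hi => h i (lt_of_lt_of_le hi (stopT_le u ξ m)))

lemma stopT_succ_of_ex {u : List (Fin r)} {ξ : ℕ → Fin r} {k : ℕ}
    (h : ∃ j, j ≤ k ∧ Hit u ξ j) : stopT u ξ (k+1) = stopT u ξ k := by
  obtain ⟨j, hj, hh⟩ := h
  rw [stopT_of_ex ⟨j, by omega, hh⟩, stopT_of_ex ⟨j, hj, hh⟩]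

lemma stopT_succ_of_not_ex {u : List (Fin r)} {ξ : ℕ → Fin r} {k : ℕ}
    (h : ¬ ∃ j, j ≤ k ∧ Hit u ξ j) : stopT u ξ (k+1) = k + 1 := by
  by_cases hex : ∃ j, j ≤ k + 1 ∧ Hit u ξ j
  · rw [stopT_of_ex hex]
    obtain ⟨j, hj, hh⟩ := hex
    have h1 : sInf {j | Hit u ξ j} ≤ k + 1 := le_trans (Nat.sInf_le hh) hj
    have h2 : Hit u ξ (sInf {j | Hit u ξ j}) :=
      Nat.sInf_mem (⟨j, hh⟩ : Set.Nonempty {j | Hit u ξ j})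
    have h3 : ¬ sInf {j | Hit u ξ j} ≤ k := fun hc => h ⟨_, hc, h2⟩
    omega
  · exact stopT_of_not_ex hex

variable [IsProbabilityMeasure μ]

lemma mart (hp1 : ∑ x, p x = 1) (hpos : ∀ x, 0 < p x)
    (hiid : ∀ (m : ℕ) (f : ℕ → Fin r),
      μ {ξ | ∀ i < m, ξ i = f i} = ∏ i ∈ Finset.range m, p (f i))
    (u : List (Fin r)) (hu : u ≠ []) :
    ∀ k, ∫⁻ ξ, wealth p u ξ (stopT u ξ k) ∂μ = ∫⁻ ξ, (stopT u ξ k : ℝ≥0∞) ∂μ := by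
  have hn1 : 1 ≤ u.length := List.length_pos_iff.mpr hu
  intro k
  induction k with
  | zero =>
      have h0 : ∀ ξ : ℕ → Fin r, stopT u ξ 0 = 0 := by
        intro ξ
        apply stopT_of_not_ex
        rintro ⟨j, hj, hhit⟩
        have := hhit.1
        omega
      have h1 : ∀ ξ : ℕ → Fin r, wealth p u ξ 0 = 0 := by
        intro ξ
        unfold wealth
        simp
      simp only [h0, h1]
      simp
  | succ k ih =>
      have hd1 : DependsOn (fun ξ => wealth p u ξ (stopT u ξ (k+1))
          + (stopT u ξ k : ℝ≥0∞)) (k+1) := by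
        intro ξ ξ' h
        show wealth p u ξ (stopT u ξ (k+1)) + ((stopT u ξ k : ℕ) : ℝ≥0∞) = _
        rw [show wealth p u ξ (stopT u ξ (k+1)) = wealth p u ξ' (stopT u ξ' (k+1)) from
            dW p u (k+1) ξ ξ' h,
          show ((stopT u ξ k : ℕ) : ℝ≥0∞) = ((stopT u ξ' k : ℕ) : ℝ≥0∞) from
            (dStop u k).mono (by omega) ξ ξ' h]
      have hd2 : DependsOn (fun ξ => wealth p u ξ (stopT u ξ k)
          + (stopT u ξ (k+1) : ℝ≥0∞)) (k+1) := by
        intro ξ ξ' h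
        show wealth p u ξ (stopT u ξ k) + ((stopT u ξ (k+1) : ℕ) : ℝ≥0∞) = _
        rw [show wealth p u ξ (stopT u ξ k) = wealth p u ξ' (stopT u ξ' k) from
            (dW p u k).mono (by omega) ξ ξ' h,
          show ((stopT u ξ (k+1) : ℕ) : ℝ≥0∞) = ((stopT u ξ' (k+1) : ℕ) : ℝ≥0∞) from
            dStop u (k+1) ξ ξ' h]
      have claim : ∫⁻ ξ, (wealth p u ξ (stopT u ξ (k+1)) + (stopT u ξ k : ℝ≥0∞)) ∂μ
          = ∫⁻ ξ, (wealth p u ξ (stopT u ξ k) + (stopT u ξ (k+1) : ℝ≥0∞)) ∂μ := by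
        rw [lintegral_step μ p hiid _ hd1, lintegral_step μ p hiid _ hd2]
        apply lintegral_congr
        intro ξ
        have hupd : ∀ y : Fin r, ∀ i < k, Function.update ξ k y i = ξ i :=
          fun y i hi => Function.update_of_ne (by omega) _ _
        by_cases hex : ∃ j, j ≤ k ∧ Hit u ξ j
        · apply Finset.sum_congr rfl
          intro y _
          have hexy : ∃ j, j ≤ k ∧ Hit u (Function.update ξ k y) j := by
            obtain ⟨j, hj, hh⟩ := hex
            exact ⟨j, hj, (Hit_congr (fun i hi => (hupd y i hi).symm) hj).mp hh⟩
          rw [stopT_succ_of_ex hexy]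
        · have hexy : ∀ y : Fin r, ¬ ∃ j, j ≤ k ∧ Hit u (Function.update ξ k y) j := by
            intro y ⟨j, hj, hh⟩
            exact hex ⟨j, hj, (Hit_congr (fun i hi => (hupd y i hi).symm) hj).mpr hh⟩
          have hsk : ∀ y : Fin r, stopT u (Function.update ξ k y) k = k :=
            fun y => stopT_of_not_ex (hexy y)
          have hsk1 : ∀ y : Fin r, stopT u (Function.update ξ k y) (k+1) = k+1 :=
            fun y => stopT_succ_of_not_ex (hexy y)
          have hwk : ∀ y : Fin r, wealth p u (Function.update ξ k y) k = wealth p u ξ k :=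
            fun y => wealth_congr (hupd y)
          have hkhit : ¬ Hit u ξ k := fun hh => hex ⟨k, le_refl k, hh⟩
          simp only [hsk, hsk1, hwk]
          have hfair := fairness hp1 hpos hu hkhit
          calc ∑ y, p y * (wealth p u (Function.update ξ k y) (k+1) + (k : ℝ≥0∞))
              = (∑ y, p y * wealth p u (Function.update ξ k y) (k+1))
                + (∑ y, p y) * (k : ℝ≥0∞) := by
                rw [Finset.sum_mul]
                rw [← Finset.sum_add_distrib]
                apply Finset.sum_congr rfl
                intro y _
                rw [mul_add]
            _ = wealth p u ξ k + 1 + (k : ℝ≥0∞) := by rw [hfair, hp1, one_mul]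
            _ = (∑ y, p y) * (wealth p u ξ k + ((k:ℕ)+1 : ℝ≥0∞)) := by
                rw [hp1, one_mul]
                ring
            _ = ∑ y, p y * (wealth p u ξ k + (((k+1):ℕ) : ℝ≥0∞)) := by
                rw [Finset.sum_mul]
                apply Finset.sum_congr rfl
                intro y _
                push_cast
                ring
      have hmW : ∀ m, Measurable (fun ξ => wealth p u ξ (stopT u ξ m)) :=
        fun m => measurable_dependsOn (dW p u m)
      have hmS : ∀ m, Measurable (fun ξ => (stopT u ξ m : ℝ≥0∞)) :=
        fun m => measurable_dependsOn (dStop u m)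
      rw [lintegral_add_left (hmW (k+1)), lintegral_add_left (hmW k)] at claim
      rw [ih] at claim
      have hfin : ∫⁻ ξ, (stopT u ξ k : ℝ≥0∞) ∂μ ≠ ∞ := by
        have hle : ∫⁻ ξ, (stopT u ξ k : ℝ≥0∞) ∂μ ≤ (k : ℝ≥0∞) := by
          calc ∫⁻ ξ, (stopT u ξ k : ℝ≥0∞) ∂μ
              ≤ ∫⁻ _, (k : ℝ≥0∞) ∂μ :=
                lintegral_mono (fun ξ => Nat.cast_le.mpr (stopT_le u ξ k))
            _ = (k : ℝ≥0∞) := by simp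
        exact ne_top_of_le_ne_top (ENNReal.natCast_ne_top k) hle
      calc ∫⁻ ξ, wealth p u ξ (stopT u ξ (k+1)) ∂μ
          = (∫⁻ ξ, (stopT u ξ k : ℝ≥0∞) ∂μ + ∫⁻ ξ, wealth p u ξ (stopT u ξ (k+1)) ∂μ)
            - ∫⁻ ξ, (stopT u ξ k : ℝ≥0∞) ∂μ := by
            rw [ENNReal.add_sub_cancel_left hfin]
        _ = ∫⁻ ξ, ((stopT u ξ (k+1)) : ℝ≥0∞) ∂μ := by
            rw [add_comm, claim, ENNReal.add_sub_cancel_left hfin]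

lemma Ew_eq_Cw (hp1 : ∑ x, p x = 1) (hpos : ∀ x, 0 < p x)
    (hiid : ∀ (m : ℕ) (f : ℕ → Fin r),
      μ {ξ | ∀ i < m, ξ i = f i} = ∏ i ∈ Finset.range m, p (f i))
    (u : List (Fin r)) : Ew μ u = Cw p u := by
  by_cases hu : u = []
  · subst hu
    have h1 : ∀ ξ : ℕ → Fin r, waitTime ([] : List (Fin r)) ξ = 0 := by
      intro ξ
      rw [waitTime_eq_iSup]
      have h2 : ∀ k, stopT ([] : List (Fin r)) ξ k = 0 := by
        intro k
        have hh : Hit ([] : List (Fin r)) ξ 0 := ⟨by simp, by simp [Hit, seg]⟩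
        rw [stopT_of_ex ⟨0, Nat.zero_le k, hh⟩]
        apply Nat.sInf_eq_zero.mpr
        left
        exact hh
      simp [h2]
    unfold Ew
    simp only [h1]
    simp [Cw]
  · have hmS : ∀ k, Measurable (fun ξ => (stopT u ξ k : ℝ≥0∞)) :=
      fun k => measurable_dependsOn (dStop u k)
    have hEw : Ew μ u = ⨆ k, ∫⁻ ξ, (stopT u ξ k : ℝ≥0∞) ∂μ := by
      unfold Ew
      calc ∫⁻ ξ, waitTime u ξ ∂μ
          = ∫⁻ ξ, ⨆ k, (stopT u ξ k : ℝ≥0∞) ∂μ := lintegral_congr (waitTime_eq_iSup u)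
        _ = ⨆ k, ∫⁻ ξ, (stopT u ξ k : ℝ≥0∞) ∂μ :=
            lintegral_iSup hmS
              (fun k k' hk ξ => Nat.cast_le.mpr (stopT_mono u ξ hk))
    have hH := mart μ p hp1 hpos hiid u hu
    have hHle : ∀ k, ∫⁻ ξ, (stopT u ξ k : ℝ≥0∞) ∂μ ≤ Bo p u := by
      intro k
      rw [← hH k]
      calc ∫⁻ ξ, wealth p u ξ (stopT u ξ k) ∂μ
          ≤ ∫⁻ _, Bo p u ∂μ := lintegral_mono (fun ξ => wealth_le_Bo p u ξ _)
        _ = Bo p u := by simp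
    have hfin : Ew μ u ≠ ∞ := by
      rw [hEw]
      exact ne_top_of_le_ne_top (Bo_ne_top hpos u) (iSup_le hHle)
    have hwm : Measurable (waitTime u) := by
      have h : waitTime u = fun ξ => ⨆ k, (stopT u ξ k : ℝ≥0∞) :=
        funext (waitTime_eq_iSup u)
      rw [h]
      exact Measurable.iSup (fun k => hmS k)
    have hae : ∀ᵐ ξ ∂μ, waitTime u ξ < ∞ := ae_lt_top hwm hfin
    have htend : ∀ᵐ ξ ∂μ, Filter.Tendsto (fun k => wealth p u ξ (stopT u ξ k))
        Filter.atTop (nhds (Cw p u)) := by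
      filter_upwards [hae] with ξ hξ
      have hne : ∃ j, Hit u ξ j := by
        by_contra hno
        push_neg at hno
        have h2 : ∀ k, stopT u ξ k = k :=
          fun k => stopT_of_not_ex (by rintro ⟨j, -, hj⟩; exact hno j hj)
        rw [waitTime_eq_iSup] at hξ
        simp only [h2] at hξ
        rw [ENNReal.iSup_natCast] at hξ
        exact absurd hξ (by simp)
      have hht : Hit u ξ (sInf {j | Hit u ξ j}) := Nat.sInf_mem hne
      set t := sInf {j | Hit u ξ j} with htdef
      have hev : ∀ k ≥ t, wealth p u ξ (stopT u ξ k) = Cw p u := by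
        intro k hk
        have h3 : stopT u ξ k = t := by rw [stopT_of_ex ⟨t, hk, hht⟩]
        rw [h3, wealth_at_hit hht]
      refine Filter.Tendsto.congr' ?_ tendsto_const_nhds
      filter_upwards [Filter.eventually_ge_atTop t] with k hk
      exact (hev k hk).symm
    have hmW : ∀ k, Measurable (fun ξ => wealth p u ξ (stopT u ξ k)) :=
      fun k => measurable_dependsOn (dW p u k)
    have hdom : Filter.Tendsto (fun k => ∫⁻ ξ, wealth p u ξ (stopT u ξ k) ∂μ)
        Filter.atTop (nhds (∫⁻ _, Cw p u ∂μ)) := by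
      refine tendsto_lintegral_of_dominated_convergence (fun _ => Bo p u) hmW
        (fun k => Filter.Eventually.of_forall (fun ξ => wealth_le_Bo p u ξ _)) ?_ htend
      simp [Bo_ne_top hpos u]
    have hCwint : (∫⁻ _, Cw p u ∂μ) = Cw p u := by simp
    rw [hCwint] at hdom
    have hdom' : Filter.Tendsto (fun k => ∫⁻ ξ, (stopT u ξ k : ℝ≥0∞) ∂μ)
        Filter.atTop (nhds (Cw p u)) := hdom.congr (fun k => hH k)
    have htendH : Filter.Tendsto (fun k => ∫⁻ ξ, (stopT u ξ k : ℝ≥0∞) ∂μ)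
        Filter.atTop (nhds (Ew μ u)) := by
      rw [hEw]
      exact tendsto_atTop_iSup
        (fun k k' hk => lintegral_mono (fun ξ => Nat.cast_le.mpr (stopT_mono u ξ hk)))
    exact tendsto_nhds_unique htendH hdom'

end Mart


section Comb
variable {p : Fin r → ℝ≥0∞}

lemma bifix_len_lt {hw u : List (Fin r)} (h : IsLongestBifix hw u) :
    hw.length < u.length := by
  have hle := h.1.2.1.length_le
  rcases lt_or_eq_of_le hle with h' | h'
  · exact h'
  · exact absurd (h.1.2.1.eq_of_length h') h.1.1

lemma take_eq_take_of_prefix {hw u : List (Fin r)} (hp : hw <+: u) {l : ℕ}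
    (hl : l ≤ hw.length) : u.take l = hw.take l := by
  have h1 : hw = u.take hw.length := List.prefix_iff_eq_take.mp hp
  rw [h1, List.take_take, min_eq_left hl]

lemma border_iff {hw u : List (Fin r)} (h : IsLongestBifix hw u) {l : ℕ}
    (hll : l < u.length) :
    (u.take l <:+ u) ↔ (l ≤ hw.length ∧ hw.take l <:+ hw) := by
  obtain ⟨⟨hne, hpre, hsuf⟩, hmax⟩ := h
  have hlt : (u.take l).length = l := by
    rw [List.length_take]; omega
  constructor
  · intro hs
    have hbif : IsBifix (u.take l) u := by
      refine ⟨?_, List.take_prefix l u, hs⟩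
      intro he
      have := congrArg List.length he
      rw [hlt] at this
      omega
    have hle : l ≤ hw.length := by
      have := hmax _ hbif
      omega
    have heq : u.take l = hw.take l := by
      have hpre2 : u.take l <+: hw :=
        List.prefix_of_prefix_length_le (List.take_prefix l u) hpre (by omega)
      have := List.prefix_iff_eq_take.mp hpre2
      rw [hlt] at this
      exact this
    have hsuf2 : u.take l <:+ hw :=
      List.suffix_of_suffix_length_le hs hsuf (by omega)
    rw [heq] at hsuf2
    exact ⟨hle, hsuf2⟩
  · rintro ⟨hle, hs⟩
    rw [take_eq_take_of_prefix hpre hle]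
    exact hs.trans hsuf

lemma Cw_append (hp1 : ∑ x, p x = 1) (hpos : ∀ x, 0 < p x)
    {v : List (Fin r)} {y : Fin r} {hw : List (Fin r)}
    (h : IsLongestBifix hw (v ++ [y])) :
    Cw p (v ++ [y]) = (pword p (v ++ [y]))⁻¹ + Cw p hw := by
  have hlenu : (v ++ [y]).length = v.length + 1 := by simp
  have hwlt : hw.length < v.length + 1 := hlenu ▸ bifix_len_lt h
  unfold Cw
  rw [hlenu, Finset.sum_range_succ]
  have htop : (if (v ++ [y]).take (v.length + 1) <:+ v ++ [y]
      then (pword p ((v ++ [y]).take (v.length + 1)))⁻¹ else 0) = (pword p (v ++ [y]))⁻¹ := by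
    rw [show (v ++ [y]).take (v.length + 1) = v ++ [y] from by
      rw [← hlenu, List.take_length]]
    rw [if_pos (List.suffix_refl _)]
  rw [htop]
  rw [add_comm]
  congr 1
  have hstep : ∀ j ∈ Finset.range v.length,
      (if (v ++ [y]).take (j+1) <:+ v ++ [y] then (pword p ((v ++ [y]).take (j+1)))⁻¹ else 0)
      = (if j + 1 ≤ hw.length ∧ hw.take (j+1) <:+ hw then (pword p (hw.take (j+1)))⁻¹ else 0) := by
    intro j hj
    simp only [Finset.mem_range] at hj
    have hiff := border_iff h (l := j+1) (by omega)
    by_cases hc : j + 1 ≤ hw.length ∧ hw.take (j+1) <:+ hw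
    · rw [if_pos (hiff.mpr hc), if_pos hc]
      congr 1
      exact congrArg (pword p) (take_eq_take_of_prefix h.1.2.1 hc.1)
    · rw [if_neg (fun hh => hc (hiff.mp hh)), if_neg hc]
  rw [Finset.sum_congr rfl hstep]
  rw [← Finset.sum_subset (Finset.range_subset_range.mpr (by omega : hw.length ≤ v.length))]
  · apply Finset.sum_congr rfl
    intro j hj
    simp only [Finset.mem_range] at hj
    rw [if_congr (and_iff_right (by omega : j + 1 ≤ hw.length)) rfl rfl]
  · intro j _ hj
    simp only [Finset.mem_range] at hj
    rw [if_neg]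
    rintro ⟨h1, -⟩
    omega

lemma suffix_append_singleton_iff (v : List (Fin r)) (y : Fin r) (j : ℕ)
    (hj : j < v.length) :
    (v.take (j+1) <:+ v ++ [y]) ↔ (v.take j <:+ v ∧ v.get ⟨j, hj⟩ = y) := by
  have h1 : v.take (j+1) = v.take j ++ [v.get ⟨j, hj⟩] := take_concat v j hj
  have hlt : (v.take (j+1)).length = j + 1 := by rw [List.length_take]; omega
  have hjlen : (v.take j).length = j := by rw [List.length_take]; omega
  constructor
  · intro hs
    have h2 := List.suffix_iff_eq_drop.mp hs
    rw [hlt] at h2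
    have h3 : (v ++ [y]).length - (j+1) = v.length - j := by
      simp only [List.length_append, List.length_singleton]
      omega
    rw [h3, List.drop_append_of_le_length (by omega)] at h2
    rw [h1] at h2
    obtain ⟨h4, h5⟩ := concat_inj.mp h2
    constructor
    · rw [h4]; exact List.drop_suffix _ _
    · exact h5
  · rintro ⟨hs, hy⟩
    have h4 : v.take j = v.drop (v.length - j) := by
      have := List.suffix_iff_eq_drop.mp hs
      rw [hjlen] at this
      exact this
    have h5 : v.take (j+1) = (v ++ [y]).drop (v.length - j) := by
      rw [h1, h4, hy, List.drop_append_of_le_length (by omega)]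
    rw [h5]
    exact List.drop_suffix _ _

lemma sum_pick (hp1 : ∑ x, p x = 1) (hpos : ∀ x, 0 < p x)
    (v : List (Fin r)) (j : ℕ) (hj : j < v.length) (A : Prop) [Decidable A] :
    ∑ y, p y * (if A ∧ v.get ⟨j, hj⟩ = y then (pword p (v.take (j+1)))⁻¹ else 0)
      = if A then (pword p (v.take j))⁻¹ else 0 := by
  by_cases hA : A
  · rw [if_pos hA]
    calc ∑ y, p y * (if A ∧ v.get ⟨j, hj⟩ = y then (pword p (v.take (j+1)))⁻¹ else 0)
        = ∑ y, (if v.get ⟨j, hj⟩ = y then p y * (pword p (v.take (j+1)))⁻¹ else 0) := by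
          apply Finset.sum_congr rfl
          intro y _
          by_cases hB : v.get ⟨j, hj⟩ = y
          · rw [if_pos ⟨hA, hB⟩, if_pos hB]
          · rw [if_neg (fun hh => hB hh.2), if_neg hB, mul_zero]
      _ = p (v.get ⟨j, hj⟩) * (pword p (v.take (j+1)))⁻¹ := by
          rw [Finset.sum_ite_eq]
          exact if_pos (Finset.mem_univ _)
      _ = (pword p (v.take j))⁻¹ := pstep hp1 hpos v hj
  · rw [if_neg hA]
    apply Finset.sum_eq_zero
    intro y _
    rw [if_neg (fun hh => hA hh.1), mul_zero]

lemma sum_step (hp1 : ∑ x, p x = 1) (hpos : ∀ x, 0 < p x) (v : List (Fin r)) :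
    ∑ y, p y * Cw p (v ++ [y])
      = (∑ y, p y * (pword p (v ++ [y]))⁻¹)
        + ∑ j ∈ Finset.range v.length,
            (if v.take j <:+ v then (pword p (v.take j))⁻¹ else 0) := by
  classical
  have hCw : ∀ y : Fin r, Cw p (v ++ [y])
      = (∑ j ∈ Finset.range v.length,
          (if (v ++ [y]).take (j+1) <:+ v ++ [y] then (pword p ((v ++ [y]).take (j+1)))⁻¹ else 0))
        + (pword p (v ++ [y]))⁻¹ := by
    intro y
    unfold Cw
    rw [show (v ++ [y]).length = v.length + 1 from by simp, Finset.sum_range_succ]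
    congr 1
    rw [show (v ++ [y]).take (v.length + 1) = v ++ [y] from by
      rw [show v.length + 1 = (v ++ [y]).length from by simp, List.take_length]]
    rw [if_pos (List.suffix_refl _)]
  simp only [hCw]
  simp only [mul_add]
  rw [Finset.sum_add_distrib]
  rw [add_comm]
  congr 1
  · calc ∑ y, p y * ∑ j ∈ Finset.range v.length,
        (if (v ++ [y]).take (j+1) <:+ v ++ [y] then (pword p ((v ++ [y]).take (j+1)))⁻¹ else 0)
        = ∑ j ∈ Finset.range v.length, ∑ y, p y *
            (if (v ++ [y]).take (j+1) <:+ v ++ [y] then (pword p ((v ++ [y]).take (j+1)))⁻¹ else 0) := by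
          simp_rw [Finset.mul_sum]
          rw [Finset.sum_comm]
      _ = ∑ j ∈ Finset.range v.length,
            (if v.take j <:+ v then (pword p (v.take j))⁻¹ else 0) := by
          apply Finset.sum_congr rfl
          intro j hj
          simp only [Finset.mem_range] at hj
          have htake : ∀ y : Fin r, (v ++ [y]).take (j+1) = v.take (j+1) :=
            fun y => List.take_append_of_le_length (by omega)
          calc ∑ y, p y *
              (if (v ++ [y]).take (j+1) <:+ v ++ [y] then (pword p ((v ++ [y]).take (j+1)))⁻¹ else 0)
              = ∑ y, p y * (if (v.take j <:+ v) ∧ v.get ⟨j, hj⟩ = y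
                  then (pword p (v.take (j+1)))⁻¹ else 0) := by
                apply Finset.sum_congr rfl
                intro y _
                congr 1
                rw [htake y]
                exact if_congr (suffix_append_singleton_iff v y j hj) rfl rfl
            _ = _ := sum_pick hp1 hpos v j hj _

lemma border_extend (hp1 : ∑ x, p x = 1) (hpos : ∀ x, 0 < p x) (v : List (Fin r)) :
    (∑ j ∈ Finset.range v.length, (if v.take j <:+ v then (pword p (v.take j))⁻¹ else 0))
      + (pword p v)⁻¹ = 1 + Cw p v := by
  have htop : (pword p v)⁻¹
      = (if v.take v.length <:+ v then (pword p (v.take v.length))⁻¹ else 0) := by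
    rw [List.take_length, if_pos (List.suffix_refl v)]
  rw [htop, ← Finset.sum_range_succ]
  rw [Finset.sum_range_succ']
  have hg0 : (if v.take 0 <:+ v then (pword p (v.take 0))⁻¹ else 0) = 1 := by simp
  rw [hg0, add_comm]
  congr 1

end Comb

end S6

theorem statement_6 {r : ℕ} (hr : 2 ≤ r) (p : Fin r → ℝ≥0∞)
    (hp1 : ∑ x, p x = 1) (hpos : ∀ x, 0 < p x)
    (μ : Measure (ℕ → Fin r)) [IsProbabilityMeasure μ]
    (hiid : ∀ (m : ℕ) (f : ℕ → Fin r),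
      μ {ξ | ∀ i < m, ξ i = f i} = ∏ i ∈ Finset.range m, p (f i))
    (w : List (Fin r)) (hw : w ≠ []) (wHat : Fin r → List (Fin r))
    (hwHat : ∀ y, IsLongestBifix (wHat y) (w.dropLast ++ [y])) (x : Fin r) :
    p x * Ew μ (w.dropLast ++ [x]) =
      Ew μ w.dropLast + 1 -
        ∑ y ∈ Finset.univ.filter (fun y => y ≠ x), p y * Ew μ (wHat y) := by
  haveI : NeZero r := ⟨by omega⟩
  classical
  have hEw : ∀ u : List (Fin r), Ew μ u = S6.Cw p u :=
    fun u => S6.Ew_eq_Cw μ p hp1 hpos hiid u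
  simp only [hEw]
  set v := w.dropLast with hv
  set S := ∑ y ∈ Finset.univ.filter (fun y => y ≠ x), p y * S6.Cw p (wHat y) with hSdef
  have hCwfin : ∀ u : List (Fin r), S6.Cw p u ≠ ∞ := S6.Cw_ne_top hpos
  have hpfin : ∀ y : Fin r, p y ≠ ∞ := S6.p_ne_top hp1
  have hSfin : S ≠ ∞ := by
    rw [hSdef, ← lt_top_iff_ne_top]
    apply ENNReal.sum_lt_top.mpr
    intro y _
    rw [lt_top_iff_ne_top]
    exact ENNReal.mul_ne_top (hpfin y) (hCwfin _)
  have hL2 : ∀ y, S6.Cw p (v ++ [y]) = (pword p (v ++ [y]))⁻¹ + S6.Cw p (wHat y) :=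
    fun y => S6.Cw_append hp1 hpos (hwHat y)
  have hD0 : ∑ y, p y * S6.Cw p (wHat y)
      = ∑ j ∈ Finset.range v.length,
          (if v.take j <:+ v then (pword p (v.take j))⁻¹ else 0) := by
    have h1 : ∑ y, p y * S6.Cw p (v ++ [y])
        = (∑ y, p y * (pword p (v ++ [y]))⁻¹) + ∑ y, p y * S6.Cw p (wHat y) := by
      rw [← Finset.sum_add_distrib]
      apply Finset.sum_congr rfl
      intro y _
      rw [hL2 y, mul_add]
    have h2 := S6.sum_step hp1 hpos v
    have hfin2 : (∑ y, p y * (pword p (v ++ [y]))⁻¹) ≠ ∞ := by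
      rw [← lt_top_iff_ne_top]
      apply ENNReal.sum_lt_top.mpr
      intro y _
      rw [lt_top_iff_ne_top]
      exact ENNReal.mul_ne_top (hpfin y) (ENNReal.inv_ne_top.mpr (S6.pword_ne_zero hpos _))
    exact (ENNReal.add_right_inj hfin2).mp (h1.symm.trans h2)
  have hsplit : ∑ y, p y * S6.Cw p (wHat y) = p x * S6.Cw p (wHat x) + S := by
    rw [hSdef, Finset.filter_ne' Finset.univ x]
    exact (Finset.add_sum_erase _ _ (Finset.mem_univ x)).symm
  have hL5 := S6.border_extend hp1 hpos v
  have hLHS : p x * S6.Cw p (v ++ [x]) = (pword p v)⁻¹ + p x * S6.Cw p (wHat x) := by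
    rw [hL2 x, mul_add]
    congr 1
    rw [S6.pword_append, S6.pword_singleton]
    rw [ENNReal.mul_inv (Or.inl (S6.pword_ne_zero hpos v)) (Or.inr (hpos x).ne')]
    rw [show p x * ((pword p v)⁻¹ * (p x)⁻¹) = (pword p v)⁻¹ * (p x * (p x)⁻¹) by ring]
    rw [ENNReal.mul_inv_cancel (hpos x).ne' (hpfin x), mul_one]
  have hkey : S6.Cw p v + 1 = S + ((pword p v)⁻¹ + p x * S6.Cw p (wHat x)) := by
    calc S6.Cw p v + 1
        = (∑ j ∈ Finset.range v.length,
            (if v.take j <:+ v then (pword p (v.take j))⁻¹ else 0)) + (pword p v)⁻¹ := by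
          rw [add_comm, ← hL5]
      _ = (p x * S6.Cw p (wHat x) + S) + (pword p v)⁻¹ := by rw [← hD0, hsplit]
      _ = S + ((pword p v)⁻¹ + p x * S6.Cw p (wHat x)) := by ring
  rw [hLHS, hkey, ENNReal.add_sub_cancel_left hSfin]
end

section
/- Let w be a finite word of length n ≥ 2. For y ∈ X let n_y be the length of the longest bifix of w[1,n−1]y, and suppose x maximizes n_y over y ∈ X. Then w[1, n_x−1] is the longest bifix of w[1, n−1]. -/
open MeasureTheory ENNReal

lemma bifix_length_lt {r : ℕ} {v w : List (Fin r)} (h : IsBifix v w) :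
    v.length < w.length := by
  rcases h with ⟨hne, hp, -⟩
  rcases lt_or_eq_of_le hp.length_le with h | h
  · exact h
  · exact absurd (hp.eq_of_length h) hne

lemma bifix_extend {r : ℕ} {v w' : List (Fin r)} (h : IsBifix v w')
    (hk : v.length < w'.length) :
    IsBifix (v ++ [w'.get ⟨v.length, hk⟩]) (w' ++ [w'.get ⟨v.length, hk⟩]) := by
  obtain ⟨hne, hp, hs⟩ := h
  refine ⟨?_, ?_, ?_⟩
  · intro heq
    have : v.length + 1 = w'.length + 1 := by
      have := congrArg List.length heq; simpa using this
    omega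
  · have hv : v = w'.take v.length := List.prefix_iff_eq_take.mp hp
    have : v ++ [w'.get ⟨v.length, hk⟩] = w'.take (v.length + 1) := by
      rw [← List.take_concat_get hk, ← hv, List.concat_eq_append]
      rfl
    rw [this]
    exact (List.take_prefix _ _).trans (List.prefix_append _ _)
  · obtain ⟨t, ht⟩ := hs
    exact ⟨t, by rw [← List.append_assoc, ht]⟩

lemma bifix_restrict {r : ℕ} {v w' : List (Fin r)} {y : Fin r}
    (h : IsBifix v (w' ++ [y])) (hv : v ≠ []) :
    IsBifix v.dropLast w' ∧ v = v.dropLast ++ [y] := by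
  obtain ⟨hne, hp, hs⟩ := h
  have hlen : v.length < w'.length + 1 := by
    have := bifix_length_lt ⟨hne, hp, hs⟩; simpa using this
  have hlen' : v.length ≤ w'.length := by omega
  have hvpos : 0 < v.length := List.length_pos_iff.mpr hv
  -- v = v.dropLast ++ [v.getLast hv]
  have hsplit : v = v.dropLast ++ [v.getLast hv] := (List.dropLast_append_getLast hv).symm
  obtain ⟨t, ht⟩ := hs
  rw [hsplit, ← List.append_assoc] at ht
  have hinj := List.append_inj' ht (by simp)
  have hy : v.getLast hv = y := by
    have := hinj.2; simpa using this
  have hsuf : v.dropLast <:+ w' := ⟨t, by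
    have := hinj.1; simpa using this⟩
  have hvtake : v = w'.take v.length := by
    have := List.prefix_iff_eq_take.mp hp
    rwa [List.take_append_of_le_length hlen'] at this
  have hpre : v <+: w' := hvtake ▸ List.take_prefix _ _
  have hdl : v.dropLast <+: w' := (List.dropLast_prefix v).trans hpre
  have hdlen : v.dropLast.length < w'.length := by
    rw [List.length_dropLast]; omega
  refine ⟨⟨?_, hdl, hsuf⟩, by rw [← hy]; exact hsplit⟩
  intro heq
  rw [heq] at hdlen; omega

theorem statement_8 {r : ℕ} (hr : 2 ≤ r)
    (w : List (Fin r)) (hw : 2 ≤ w.length) (wHat : Fin r → List (Fin r))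
    (hwHat : ∀ y, IsLongestBifix (wHat y) (w.dropLast ++ [y])) (x : Fin r)
    (hx : ∀ y, (wHat y).length ≤ (wHat x).length) :
    IsLongestBifix (w.take ((wHat x).length - 1)) w.dropLast := by
  set w' := w.dropLast with hw'def
  have hw'len : w'.length = w.length - 1 := List.length_dropLast
  have hw'pos : 0 < w'.length := by omega
  have h0 : IsBifix ([] : List (Fin r)) w' :=
    ⟨by intro h; rw [← h] at hw'pos; simp at hw'pos, List.nil_prefix, List.nil_suffix⟩
  -- wHat x is nonempty
  have h1 : 1 ≤ (wHat x).length := by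
    have hb := bifix_extend h0 hw'pos
    set y := w'.get ⟨0, hw'pos⟩ with hy
    have h2 := (hwHat y).2 _ hb
    have h3 := hx y
    simpa using h2.trans h3
  have hne : wHat x ≠ [] := by
    intro h; rw [h] at h1; simp at h1
  obtain ⟨hu, hux⟩ := bifix_restrict (hwHat x).1 hne
  set u := (wHat x).dropLast with hudef
  have hulen : u.length = (wHat x).length - 1 := List.length_dropLast
  -- w.take ((wHat x).length - 1) = u
  have hupre : u <+: w' := hu.2.1
  have hutake : u = w'.take u.length := List.prefix_iff_eq_take.mp hupre
  have htake : w.take ((wHat x).length - 1) = u := by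
    rw [hutake, hulen, hw'def, List.dropLast_eq_take, List.take_take]
    congr 1
    have := bifix_length_lt hu
    omega
  rw [htake]
  refine ⟨hu, ?_⟩
  intro v' hv'
  have hvlt : v'.length < w'.length := bifix_length_lt hv'
  have hb := bifix_extend hv' hvlt
  have h2 := (hwHat _).2 _ hb
  have h3 := hx (w'.get ⟨v'.length, hvlt⟩)
  have : v'.length + 1 ≤ (wHat x).length := by
    simpa using h2.trans h3
  omega
end

section
/- Let w be a finite word of length n ≥ 2. For y ∈ X let ŵ_y be the longest bifix of w[1,n−1]y with length n_y, and suppose x maximizes n_y. Then for every y ∈ X with y ≠ x, ŵ_y is also the longest bifix of the word w[1, n_x−1]y. -/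
open MeasureTheory ENNReal

lemma take_pref' {α} (l : List α) {m n : ℕ} (h : m ≤ n) : l.take m <+: l.take n := by
  have : (l.take n).take m = l.take m := by
    rw [List.take_take, Nat.min_eq_left h]
  exact this ▸ List.take_prefix m (l.take n)

lemma suffix_app_sing {α} {a b : List α} (h : a <:+ b) (y : α) : a ++ [y] <:+ b ++ [y] := by
  obtain ⟨t, rfl⟩ := h
  exact ⟨t, (List.append_assoc _ _ _).symm⟩

theorem statement_9 {r : ℕ} (hr : 2 ≤ r)
    (w : List (Fin r)) (hw : 2 ≤ w.length) (wHat : Fin r → List (Fin r))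
    (hwHat : ∀ y, IsLongestBifix (wHat y) (w.dropLast ++ [y])) (x : Fin r)
    (hx : ∀ y, (wHat y).length ≤ (wHat x).length) :
    ∀ y, y ≠ x → IsLongestBifix (wHat y) (w.take ((wHat x).length - 1) ++ [y]) := by
  intro y hyx
  set u := w.dropLast with hu
  have hul : u.length = w.length - 1 := List.length_dropLast
  have hul1 : 1 ≤ u.length := by omega
  -- basic facts for any z
  have hlen : ∀ z, (wHat z).length ≤ u.length := by
    intro z
    have h1 := (hwHat z).1.2.1.length_le
    rcases Nat.lt_or_ge (wHat z).length (u.length + 1) with h | h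
    · simpa using Nat.lt_succ_iff.mp h
    · exfalso
      apply (hwHat z).1.1
      apply (hwHat z).1.2.1.eq_of_length
      simp at h1 ⊢
      omega
  have htake : ∀ z, wHat z = u.take (wHat z).length := by
    intro z
    have hp : wHat z <+: u :=
      List.prefix_of_prefix_length_le (hwHat z).1.2.1 (List.prefix_append u [z]) (hlen z)
    exact List.prefix_iff_eq_take.mp hp
  have hlast : ∀ z, wHat z ≠ [] → ∃ l', wHat z = l' ++ [z] := by
    intro z hz
    obtain ⟨t, ht⟩ := (hwHat z).1.2.2
    have h1 : (t ++ wHat z).getLast? = (wHat z).getLast? :=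
      List.getLast?_append_of_ne_nil _ hz
    rw [ht, List.getLast?_concat] at h1
    replace h1 := h1.symm
    rw [List.getLast?_eq_some_iff] at h1
    obtain ⟨l', hl'⟩ := h1
    exact ⟨l', hl'⟩
  have hdl : ∀ z, (wHat z).dropLast <:+ u := by
    intro z
    rcases eq_or_ne (wHat z) [] with h | h
    · simp [h]
    · obtain ⟨t, ht⟩ := (hwHat z).1.2.2
      refine ⟨t, ?_⟩
      have := congrArg List.dropLast ht
      rwa [List.dropLast_append_of_ne_nil h, List.dropLast_concat] at this
  have hdltake : ∀ z, (wHat z).dropLast = u.take ((wHat z).length - 1) := by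
    intro z
    rw [htake z, List.dropLast_eq_take, List.length_take, List.take_take]
    congr 1
    omega
  -- rewrite goal's w.take to u.take
  have hwtake : w.take ((wHat x).length - 1) = u.take ((wHat x).length - 1) := by
    rw [hu, List.dropLast_eq_take, List.take_take, Nat.min_eq_left]
    have := hlen x; omega
  rw [hwtake]
  rcases Nat.eq_zero_or_pos (wHat x).length with hx0 | hx0
  · -- wHat x = [], so all wHat z = []
    have hy0 : wHat y = [] := List.eq_nil_of_length_eq_zero (by have := hx y; omega)
    rw [hx0, hy0]
    simp only [Nat.zero_sub, List.take_zero, List.nil_append]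
    refine ⟨⟨by simp, List.nil_prefix, List.nil_suffix⟩, ?_⟩
    intro v' hv'
    have h1 := hv'.2.1.length_le
    simp at h1
    rcases Nat.lt_or_ge v'.length 1 with h | h
    · omega
    · exfalso
      exact hv'.1 (hv'.2.1.eq_of_length (by simp; omega))
  · -- main case: n_x ≥ 1
    have hxne : wHat x ≠ [] := by
      intro h; rw [h] at hx0; simp at hx0
    have hylt : (wHat y).length < (wHat x).length := by
      rcases Nat.lt_or_ge (wHat y).length (wHat x).length with h | h
      · exact h
      · exfalso
        have heq : (wHat y).length = (wHat x).length := le_antisymm (hx y) h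
        have hyne : wHat y ≠ [] := by
          intro h'; rw [h'] at heq; simp at heq; omega
        have hlists : wHat y = wHat x := by rw [htake y, htake x, heq]
        obtain ⟨ly, hly⟩ := hlast y hyne
        obtain ⟨lx, hlx⟩ := hlast x hxne
        rw [hlists, hlx] at hly
        have : y = x := by
          have := congrArg List.getLast? hly
          rw [List.getLast?_concat, List.getLast?_concat] at this
          exact (Option.some.inj this).symm
        exact hyx this
    have hsuffx : u.take ((wHat x).length - 1) <:+ u := by
      rw [← hdltake x]; exact hdl x
    have hsufs : u.take ((wHat x).length - 1) ++ [y] <:+ u ++ [y] := suffix_app_sing hsuffx y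
    have hylen1 : (wHat y).length ≤ (wHat x).length - 1 := by omega
    constructor
    · refine ⟨?_, ?_, ?_⟩
      · -- ne, by lengths
        intro h
        have := congrArg List.length h
        simp [List.length_take] at this
        have := hlen x
        omega
      · -- prefix
        rw [htake y]
        exact (take_pref' u hylen1).trans (List.prefix_append _ _)
      · -- suffix
        rcases eq_or_ne (wHat y) [] with h | h
        · rw [h]; exact List.nil_suffix
        · obtain ⟨ly, hly⟩ := hlast y h
          have hdly : (wHat y).dropLast = ly := by rw [hly, List.dropLast_concat]
          have hyeq : wHat y = u.take ((wHat y).length - 1) ++ [y] := by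
            rw [← hdltake y, hdly, ← hly]
          rw [hyeq]
          refine suffix_app_sing ?_ y
          refine List.suffix_of_suffix_length_le (by rw [← hdltake y]; exact hdl y) hsuffx ?_
          simp [List.length_take]
          have := hlen x; have := hlen y
          omega
    · -- longest
      intro v' hv'
      apply (hwHat y).2
      have hv'len : v'.length < (wHat x).length := by
        have h1 := hv'.2.1.length_le
        simp [List.length_take] at h1
        have := hlen x
        rcases Nat.lt_or_ge v'.length ((wHat x).length - 1 + 1) with h | h
        · omega
        · exfalso
          exact hv'.1 (hv'.2.1.eq_of_length (by simp [List.length_take]; omega))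
      refine ⟨?_, ?_, ?_⟩
      · intro h
        have := congrArg List.length h
        simp at this
        have := hlen x; omega
      · have hp : v' <+: u.take ((wHat x).length - 1) := by
          refine List.prefix_of_prefix_length_le hv'.2.1 (List.prefix_append _ _) ?_
          simp [List.length_take]
          have := hlen x; omega
        exact (hp.trans (List.take_prefix _ _)).trans (List.prefix_append _ _)
      · exact hv'.2.2.trans hsufs
end
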